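/- arXiv:1708.05397 — 7 statements merged into one kernel-verified Lean document; each statement's English description precedes it below -/
import Mathlib

section
/- Superposition Principle: if f is perfectly harmonic on an open set Ω₁ ⊆ ℝ^N and g is perfectly harmonic on an open set Ω₂ ⊆ ℝ^M, then for any real constants α and β the function h(x,y) = α·f(x) + β·g(y) is perfectly harmonic on Ω₁ × Ω₂ ⊆ ℝ^{N+M}. -/
noncomputable section

/-- The partial derivative `∂f/∂xᵢ` of a function on `ℝ^N`. -/
noncomputable def pd {N : ℕ} (f : (Fin N → ℝ) → ℝ) (i : Fin N) (x : Fin N → ℝ) : ℝ :=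
  fderiv ℝ f x (Pi.single i 1)

/-- The Laplacian `Δf = Σᵢ ∂²f/∂xᵢ²`. -/
noncomputable def lap {N : ℕ} (f : (Fin N → ℝ) → ℝ) (x : Fin N → ℝ) : ℝ :=
  ∑ i, pd (pd f i) i x

/-- The ∞-Laplacian `Δ_∞ f = Σᵢⱼ (∂f/∂xᵢ)(∂f/∂xⱼ)(∂²f/∂xᵢ∂xⱼ)`. -/
noncomputable def infLap {N : ℕ} (f : (Fin N → ℝ) → ℝ) (x : Fin N → ℝ) : ℝ :=
  ∑ i, ∑ j, pd f i x * pd f j x * pd (pd f j) i x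

/-- The 1-Laplacian `Δ₁f = |∇f|²Δf − Δ_∞f`. -/
noncomputable def lap1 {N : ℕ} (f : (Fin N → ℝ) → ℝ) (x : Fin N → ℝ) : ℝ :=
  (∑ i, pd f i x ^ 2) * lap f x - infLap f x

/-- A C² function is perfectly harmonic on `Ω` if `Δf = 0` and `Δ_∞ f = 0` on `Ω`. -/
def PerfectlyHarmonic {N : ℕ} (f : (Fin N → ℝ) → ℝ) (Ω : Set (Fin N → ℝ)) : Prop :=
  ContDiffOn ℝ 2 f Ω ∧ ∀ x ∈ Ω, lap f x = 0 ∧ infLap f x = 0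

/-- Two C² functions `u, v` are orthogonal twin-harmonics on `Ω` if at every point of `Ω`:
`v·Δu = u·Δv`, `v·Δ_∞u = u·Δ_∞v`, `|∇u|² = |∇v|²`, and `∇u·∇v = 0`. -/
def TwinHarmonics {N : ℕ} (u v : (Fin N → ℝ) → ℝ) (Ω : Set (Fin N → ℝ)) : Prop :=
  ContDiffOn ℝ 2 u Ω ∧ ContDiffOn ℝ 2 v Ω ∧ ∀ x ∈ Ω,
    v x * lap u x = u x * lap v x ∧
    v x * infLap u x = u x * infLap v x ∧
    (∑ i, pd u i x ^ 2) = (∑ i, pd v i x ^ 2) ∧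
    (∑ i, pd u i x * pd v i x) = 0

noncomputable def projL (N M : ℕ) : ((Fin (N+M) → ℝ) →L[ℝ] (Fin N → ℝ)) :=
  ContinuousLinearMap.pi fun i => ContinuousLinearMap.proj (Fin.castAdd M i)
noncomputable def projR (N M : ℕ) : ((Fin (N+M) → ℝ) →L[ℝ] (Fin M → ℝ)) :=
  ContinuousLinearMap.pi fun j => ContinuousLinearMap.proj (Fin.natAdd N j)

lemma projL_single (N M : ℕ) (i : Fin N) :
    projL N M (Pi.single (Fin.castAdd M i) 1) = Pi.single i 1 := by
  funext i'; simp [projL, Pi.single_apply, Fin.ext_iff]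

lemma projR_single (N M : ℕ) (j : Fin M) :
    projR N M (Pi.single (Fin.natAdd N j) 1) = Pi.single j 1 := by
  funext j'; simp [projR, Pi.single_apply, Fin.ext_iff]

lemma projL_single' (N M : ℕ) (j : Fin M) :
    projL N M (Pi.single (Fin.natAdd N j) 1) = 0 := by
  funext i'
  have : (Fin.castAdd M i' : Fin (N+M)) ≠ Fin.natAdd N j := by simp [Fin.ext_iff]; omega
  simp [projL, Pi.single_apply, this]

lemma projR_single' (N M : ℕ) (i : Fin N) :
    projR N M (Pi.single (Fin.castAdd M i) 1) = 0 := by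
  funext j'
  have : (Fin.natAdd N j' : Fin (N+M)) ≠ Fin.castAdd M i := by simp [Fin.ext_iff]; omega
  simp [projR, Pi.single_apply, this]

noncomputable def hfun {N M : ℕ} (f : (Fin N → ℝ) → ℝ) (g : (Fin M → ℝ) → ℝ) (α β : ℝ) :
    (Fin (N+M) → ℝ) → ℝ :=
  fun x => α * f (projL N M x) + β * g (projR N M x)

lemma fderiv_hfun {N M : ℕ} {f : (Fin N → ℝ) → ℝ} {g : (Fin M → ℝ) → ℝ}
    {α β : ℝ} {x : Fin (N+M) → ℝ}
    (hf : DifferentiableAt ℝ f (projL N M x)) (hg : DifferentiableAt ℝ g (projR N M x)) :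
    fderiv ℝ (hfun f g α β) x
      = α • ((fderiv ℝ f (projL N M x)).comp (projL N M))
        + β • ((fderiv ℝ g (projR N M x)).comp (projR N M)) :=
  (((hf.hasFDerivAt.comp x (projL N M).hasFDerivAt).const_mul α).add
   ((hg.hasFDerivAt.comp x (projR N M).hasFDerivAt).const_mul β)).fderiv

lemma fderiv_compL {N M : ℕ} {φ : (Fin N → ℝ) → ℝ} {c : ℝ} {x : Fin (N+M) → ℝ}
    (hφ : DifferentiableAt ℝ φ (projL N M x)) :
    fderiv ℝ (fun y => c * φ (projL N M y)) x
      = c • ((fderiv ℝ φ (projL N M x)).comp (projL N M)) :=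
  ((hφ.hasFDerivAt.comp x (projL N M).hasFDerivAt).const_mul c).fderiv

lemma fderiv_compR {N M : ℕ} {ψ : (Fin M → ℝ) → ℝ} {c : ℝ} {x : Fin (N+M) → ℝ}
    (hψ : DifferentiableAt ℝ ψ (projR N M x)) :
    fderiv ℝ (fun y => c * ψ (projR N M y)) x
      = c • ((fderiv ℝ ψ (projR N M x)).comp (projR N M)) :=
  ((hψ.hasFDerivAt.comp x (projR N M).hasFDerivAt).const_mul c).fderiv

lemma pd_differentiableAt {N : ℕ} {f : (Fin N → ℝ) → ℝ} {y : Fin N → ℝ}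
    (hf : ContDiffAt ℝ 2 f y) (i : Fin N) : DifferentiableAt ℝ (pd f i) y := by
  have h1 : ContDiffAt ℝ 1 (fderiv ℝ f) y := hf.fderiv_right (by norm_num)
  exact (((ContinuousLinearMap.apply ℝ ℝ (Pi.single i (1:ℝ))).contDiff.contDiffAt.comp y
    h1)).differentiableAt (by norm_num)

lemma pd_hfun_cast {N M : ℕ} {f : (Fin N → ℝ) → ℝ} {g : (Fin M → ℝ) → ℝ}
    {α β : ℝ} {x : Fin (N+M) → ℝ}
    (hf : DifferentiableAt ℝ f (projL N M x)) (hg : DifferentiableAt ℝ g (projR N M x))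
    (i : Fin N) :
    pd (hfun f g α β) (Fin.castAdd M i) x = α * pd f i (projL N M x) := by
  unfold pd
  rw [fderiv_hfun hf hg]
  simp [projL_single, projR_single']

lemma pd_hfun_nat {N M : ℕ} {f : (Fin N → ℝ) → ℝ} {g : (Fin M → ℝ) → ℝ}
    {α β : ℝ} {x : Fin (N+M) → ℝ}
    (hf : DifferentiableAt ℝ f (projL N M x)) (hg : DifferentiableAt ℝ g (projR N M x))
    (j : Fin M) :
    pd (hfun f g α β) (Fin.natAdd N j) x = β * pd g j (projR N M x) := by
  unfold pd
  rw [fderiv_hfun hf hg]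
  simp [projR_single, projL_single']

section Second
variable {N M : ℕ} {f : (Fin N → ℝ) → ℝ} {g : (Fin M → ℝ) → ℝ}
  {Ω₁ : Set (Fin N → ℝ)} {Ω₂ : Set (Fin M → ℝ)} {α β : ℝ} {x : Fin (N+M) → ℝ}
  (hΩ₁ : IsOpen Ω₁) (hΩ₂ : IsOpen Ω₂)
  (hf : ContDiffOn ℝ 2 f Ω₁) (hg : ContDiffOn ℝ 2 g Ω₂)
  (hx1 : projL N M x ∈ Ω₁) (hx2 : projR N M x ∈ Ω₂)

include hΩ₁ hΩ₂ hf hg hx1 hx2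

lemma hev_cast (i' : Fin N) :
    pd (hfun f g α β) (Fin.castAdd M i') =ᶠ[nhds x] fun y => α * pd f i' (projL N M y) := by
  have hS : IsOpen ((projL N M)⁻¹' Ω₁ ∩ (projR N M)⁻¹' Ω₂) :=
    (hΩ₁.preimage (projL N M).continuous).inter (hΩ₂.preimage (projR N M).continuous)
  exact Filter.eventuallyEq_of_mem (hS.mem_nhds ⟨hx1, hx2⟩) fun y hy =>
    pd_hfun_cast ((hf.contDiffAt (hΩ₁.mem_nhds hy.1)).differentiableAt (by norm_num))
      ((hg.contDiffAt (hΩ₂.mem_nhds hy.2)).differentiableAt (by norm_num)) i'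

lemma hev_nat (j' : Fin M) :
    pd (hfun f g α β) (Fin.natAdd N j') =ᶠ[nhds x] fun y => β * pd g j' (projR N M y) := by
  have hS : IsOpen ((projL N M)⁻¹' Ω₁ ∩ (projR N M)⁻¹' Ω₂) :=
    (hΩ₁.preimage (projL N M).continuous).inter (hΩ₂.preimage (projR N M).continuous)
  exact Filter.eventuallyEq_of_mem (hS.mem_nhds ⟨hx1, hx2⟩) fun y hy =>
    pd_hfun_nat ((hf.contDiffAt (hΩ₁.mem_nhds hy.1)).differentiableAt (by norm_num))
      ((hg.contDiffAt (hΩ₂.mem_nhds hy.2)).differentiableAt (by norm_num)) j'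

lemma pd_pd_cc (i i' : Fin N) :
    pd (pd (hfun f g α β) (Fin.castAdd M i')) (Fin.castAdd M i) x
      = α * pd (pd f i') i (projL N M x) := by
  show fderiv ℝ (pd (hfun f g α β) (Fin.castAdd M i')) x (Pi.single (Fin.castAdd M i) 1) = _
  rw [(hev_cast hΩ₁ hΩ₂ hf hg hx1 hx2 i').fderiv_eq,
    fderiv_compL (pd_differentiableAt (hf.contDiffAt (hΩ₁.mem_nhds hx1)) i')]
  simp [projL_single, pd]

lemma pd_pd_nc (i : Fin N) (j' : Fin M) :
    pd (pd (hfun f g α β) (Fin.natAdd N j')) (Fin.castAdd M i) x = 0 := by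
  show fderiv ℝ (pd (hfun f g α β) (Fin.natAdd N j')) x (Pi.single (Fin.castAdd M i) 1) = _
  rw [(hev_nat hΩ₁ hΩ₂ hf hg hx1 hx2 j').fderiv_eq,
    fderiv_compR (pd_differentiableAt (hg.contDiffAt (hΩ₂.mem_nhds hx2)) j')]
  simp [projR_single']

lemma pd_pd_cn (j : Fin M) (i' : Fin N) :
    pd (pd (hfun f g α β) (Fin.castAdd M i')) (Fin.natAdd N j) x = 0 := by
  show fderiv ℝ (pd (hfun f g α β) (Fin.castAdd M i')) x (Pi.single (Fin.natAdd N j) 1) = _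
  rw [(hev_cast hΩ₁ hΩ₂ hf hg hx1 hx2 i').fderiv_eq,
    fderiv_compL (pd_differentiableAt (hf.contDiffAt (hΩ₁.mem_nhds hx1)) i')]
  simp [projL_single']

lemma pd_pd_nn (j j' : Fin M) :
    pd (pd (hfun f g α β) (Fin.natAdd N j')) (Fin.natAdd N j) x
      = β * pd (pd g j') j (projR N M x) := by
  show fderiv ℝ (pd (hfun f g α β) (Fin.natAdd N j')) x (Pi.single (Fin.natAdd N j) 1) = _
  rw [(hev_nat hΩ₁ hΩ₂ hf hg hx1 hx2 j').fderiv_eq,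
    fderiv_compR (pd_differentiableAt (hg.contDiffAt (hΩ₂.mem_nhds hx2)) j')]
  simp [projR_single, pd]

end Second

/-- **Superposition Principle.** If `f` is perfectly harmonic on an open `Ω₁ ⊆ ℝ^N` and `g` is
perfectly harmonic on an open `Ω₂ ⊆ ℝ^M`, then for any real `α, β` the function
`h(x,y) = α·f(x) + β·g(y)` is perfectly harmonic on `Ω₁ × Ω₂ ⊆ ℝ^(N+M)`. -/
theorem superposition_principle {N M : ℕ}
    (f : (Fin N → ℝ) → ℝ) (g : (Fin M → ℝ) → ℝ)
    (Ω₁ : Set (Fin N → ℝ)) (Ω₂ : Set (Fin M → ℝ))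
    (hΩ₁ : IsOpen Ω₁) (hΩ₂ : IsOpen Ω₂)
    (hf : PerfectlyHarmonic f Ω₁) (hg : PerfectlyHarmonic g Ω₂)
    (α β : ℝ) :
    PerfectlyHarmonic
      (fun x : Fin (N + M) → ℝ =>
        α * f (fun i => x (Fin.castAdd M i)) + β * g (fun j => x (Fin.natAdd N j)))
      {x : Fin (N + M) → ℝ |
        (fun i => x (Fin.castAdd M i)) ∈ Ω₁ ∧ (fun j => x (Fin.natAdd N j)) ∈ Ω₂} := by
  constructor
  · show ContDiffOn ℝ 2 (hfun f g α β) _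
    exact (contDiffOn_const.mul (hf.1.comp ((projL N M).contDiff.contDiffOn)
      fun y hy => hy.1)).add
      (contDiffOn_const.mul (hg.1.comp ((projR N M).contDiff.contDiffOn) fun y hy => hy.2))
  · intro x hx
    have hx1 : projL N M x ∈ Ω₁ := hx.1
    have hx2 : projR N M x ∈ Ω₂ := hx.2
    have hdf : DifferentiableAt ℝ f (projL N M x) :=
      (hf.1.contDiffAt (hΩ₁.mem_nhds hx1)).differentiableAt (by norm_num)
    have hdg : DifferentiableAt ℝ g (projR N M x) :=
      (hg.1.contDiffAt (hΩ₂.mem_nhds hx2)).differentiableAt (by norm_num)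
    have hc1 : ∀ i, pd (hfun f g α β) (Fin.castAdd M i) x = α * pd f i (projL N M x) :=
      fun i => pd_hfun_cast hdf hdg i
    have hn1 : ∀ j, pd (hfun f g α β) (Fin.natAdd N j) x = β * pd g j (projR N M x) :=
      fun j => pd_hfun_nat hdf hdg j
    have hcc := pd_pd_cc hΩ₁ hΩ₂ hf.1 hg.1 hx1 hx2 (α := α) (β := β)
    have hnn := pd_pd_nn hΩ₁ hΩ₂ hf.1 hg.1 hx1 hx2 (α := α) (β := β)
    have hcn := pd_pd_cn hΩ₁ hΩ₂ hf.1 hg.1 hx1 hx2 (α := α) (β := β)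
    have hnc := pd_pd_nc hΩ₁ hΩ₂ hf.1 hg.1 hx1 hx2 (α := α) (β := β)
    have hlf := (hf.2 _ hx1).1
    have hlg := (hg.2 _ hx2).1
    have hif := (hf.2 _ hx1).2
    have hig := (hg.2 _ hx2).2
    rw [lap] at hlf hlg
    rw [infLap] at hif hig
    constructor
    · show lap (hfun f g α β) x = 0
      rw [lap, Fin.sum_univ_add]
      simp only [hcc, hnn, ← Finset.mul_sum]
      rw [hlf, hlg]; ring
    · show infLap (hfun f g α β) x = 0
      rw [infLap]
      simp only [Fin.sum_univ_add]
      simp only [hcc, hnn, hcn, hnc, hc1, hn1, mul_zero, zero_mul,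
        Finset.sum_const_zero, add_zero, zero_add]
      have e1 : ∀ (i j : Fin N), α * pd f i (projL N M x) * (α * pd f j (projL N M x)) *
          (α * pd (pd f j) i (projL N M x))
          = α^3 * (pd f i (projL N M x) * pd f j (projL N M x) * pd (pd f j) i (projL N M x)) := by
        intros; ring
      have e2 : ∀ (i j : Fin M), β * pd g i (projR N M x) * (β * pd g j (projR N M x)) *
          (β * pd (pd g j) i (projR N M x))
          = β^3 * (pd g i (projR N M x) * pd g j (projR N M x) * pd (pd g j) i (projR N M x)) := by
        intros; ring
      simp only [e1, e2, ← Finset.mul_sum]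
      rw [hif, hig]; ring

end
end

section
/- For any real constants a and b, the function g(x₁,x₂) = a + b·arctan(x₂/x₁) is perfectly harmonic on the open set {(x₁,x₂) ∈ ℝ² : x₁ ≠ 0}. -/
open Real


noncomputable section

noncomputable def cp (i : Fin 2) : (Fin 2 → ℝ) →L[ℝ] ℝ := ContinuousLinearMap.proj i

lemma hasF (a b : ℝ) (x : Fin 2 → ℝ) (hx : x 0 ≠ 0) :
    HasFDerivAt (fun x : Fin 2 → ℝ => a + b * Real.arctan (x 1 / x 0))
      (b • ((1 / (1 + (x 1 * (x 0)⁻¹)^2)) •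
        ((x 1) • ((-((x 0^2)⁻¹)) • cp 0) + ((x 0)⁻¹) • cp 1))) x := by
  have h1 : HasFDerivAt (fun x : Fin 2 → ℝ => x 1) (cp 1) x := (cp 1).hasFDerivAt
  have h0 : HasFDerivAt (fun x : Fin 2 → ℝ => x 0) (cp 0) x := (cp 0).hasFDerivAt
  have hinv := (hasDerivAt_inv hx).comp_hasFDerivAt x h0
  have hu := h1.mul hinv
  have harc := (Real.hasDerivAt_arctan (x 1 * (x 0)⁻¹)).comp_hasFDerivAt x hu
  have hf := (harc.const_mul b).const_add a
  have he : (fun x : Fin 2 → ℝ => a + b * Real.arctan (x 1 / x 0)) =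
      (fun x : Fin 2 → ℝ => a + b * ((Real.arctan ∘ fun x : Fin 2 → ℝ => x 1 * ((fun y : ℝ => y⁻¹) ∘ fun x : Fin 2 → ℝ => x 0) x) x)) := by
    funext y; simp [Function.comp, div_eq_mul_inv]
  rw [he]
  exact hf

lemma pdf0 (a b : ℝ) (x : Fin 2 → ℝ) (hx : x 0 ≠ 0) :
    pd (fun x : Fin 2 → ℝ => a + b * Real.arctan (x 1 / x 0)) 0 x
      = -(b * x 1) / (x 0 ^ 2 + x 1 ^ 2) := by
  have hr : x 0 ^ 2 + x 1 ^ 2 ≠ 0 := by positivity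
  rw [pd, (hasF a b x hx).fderiv]
  simp [cp]
  field_simp

lemma pdf1 (a b : ℝ) (x : Fin 2 → ℝ) (hx : x 0 ≠ 0) :
    pd (fun x : Fin 2 → ℝ => a + b * Real.arctan (x 1 / x 0)) 1 x
      = b * x 0 / (x 0 ^ 2 + x 1 ^ 2) := by
  have hr : x 0 ^ 2 + x 1 ^ 2 ≠ 0 := by positivity
  rw [pd, (hasF a b x hx).fderiv]
  simp [cp]
  field_simp

noncomputable def qf (c d : ℝ) (x : Fin 2 → ℝ) : ℝ :=
  (c * x 0 + d * x 1) / (x 0 ^ 2 + x 1 ^ 2)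

lemma hasQ (c d : ℝ) (x : Fin 2 → ℝ) (hr : x 0 ^ 2 + x 1 ^ 2 ≠ 0) :
    HasFDerivAt (qf c d)
      ((c * x 0 + d * x 1) • ((-(((x 0 * x 0 + x 1 * x 1) ^ 2)⁻¹)) •
          ((x 0 • cp 0 + x 0 • cp 0) + (x 1 • cp 1 + x 1 • cp 1)))
        + ((x 0 * x 0 + x 1 * x 1)⁻¹) • (c • cp 0 + d • cp 1)) x := by
  have hrne : x 0 * x 0 + x 1 * x 1 ≠ 0 := by rw [← sq, ← sq]; exact hr
  have h1 : HasFDerivAt (fun x : Fin 2 → ℝ => x 1) (cp 1) x := (cp 1).hasFDerivAt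
  have h0 : HasFDerivAt (fun x : Fin 2 → ℝ => x 0) (cp 0) x := (cp 0).hasFDerivAt
  have hn := (h0.const_mul c).add (h1.const_mul d)
  have hr' := (h0.mul h0).add (h1.mul h1)
  have hinv := (hasDerivAt_inv hrne).comp_hasFDerivAt x hr'
  have hq := hn.mul hinv
  have he : qf c d = (fun y : Fin 2 → ℝ =>
      (c * y 0 + d * y 1) * ((fun z : ℝ => z⁻¹) ∘ fun y : Fin 2 → ℝ => y 0 * y 0 + y 1 * y 1) y) := by
    funext y; simp [qf, Function.comp, div_eq_mul_inv, sq]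
  rw [he]
  exact hq

lemma pdq0 (c d : ℝ) (x : Fin 2 → ℝ) (hr : x 0 ^ 2 + x 1 ^ 2 ≠ 0) :
    pd (qf c d) 0 x =
      (c * (x 0 ^ 2 + x 1 ^ 2) - (c * x 0 + d * x 1) * (2 * x 0)) / (x 0 ^ 2 + x 1 ^ 2) ^ 2 := by
  have hm : x 0 * x 0 + x 1 * x 1 ≠ 0 := by rw [← sq, ← sq]; exact hr
  have hm2 : (x 0 * x 0 + x 1 * x 1) ^ 2 ≠ 0 := pow_ne_zero _ hm
  rw [pd, (hasQ c d x hr).fderiv]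
  simp only [ContinuousLinearMap.add_apply, ContinuousLinearMap.smul_apply,
    ContinuousLinearMap.coe_smul', Pi.smul_apply, cp, ContinuousLinearMap.proj_apply,
    smul_eq_mul]
  simp [Pi.single_apply]
  field_simp
  ring

lemma pdq1 (c d : ℝ) (x : Fin 2 → ℝ) (hr : x 0 ^ 2 + x 1 ^ 2 ≠ 0) :
    pd (qf c d) 1 x =
      (d * (x 0 ^ 2 + x 1 ^ 2) - (c * x 0 + d * x 1) * (2 * x 1)) / (x 0 ^ 2 + x 1 ^ 2) ^ 2 := by
  have hm : x 0 * x 0 + x 1 * x 1 ≠ 0 := by rw [← sq, ← sq]; exact hr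
  have hm2 : (x 0 * x 0 + x 1 * x 1) ^ 2 ≠ 0 := pow_ne_zero _ hm
  rw [pd, (hasQ c d x hr).fderiv]
  simp only [ContinuousLinearMap.add_apply, ContinuousLinearMap.smul_apply,
    ContinuousLinearMap.coe_smul', Pi.smul_apply, cp, ContinuousLinearMap.proj_apply,
    smul_eq_mul]
  simp [Pi.single_apply]
  field_simp
  ring

/-- For any real `a, b`, the function `g(x₁,x₂) = a + b·arctan(x₂/x₁)` is perfectly
harmonic on the open set `{(x₁,x₂) ∈ ℝ² : x₁ ≠ 0}`. -/
theorem arctan_perfectly_harmonic (a b : ℝ) :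
    PerfectlyHarmonic (fun x : Fin 2 → ℝ => a + b * Real.arctan (x 1 / x 0))
      {x : Fin 2 → ℝ | x 0 ≠ 0} := by
  set f : (Fin 2 → ℝ) → ℝ := fun x => a + b * Real.arctan (x 1 / x 0) with hf
  have hΩ : IsOpen {x : Fin 2 → ℝ | x 0 ≠ 0} :=
    isOpen_compl_singleton.preimage (continuous_apply 0)
  constructor
  · have h0c : ContDiff ℝ 2 (fun x : Fin 2 → ℝ => x 0) := (cp 0).contDiff
    have h1c : ContDiff ℝ 2 (fun x : Fin 2 → ℝ => x 1) := (cp 1).contDiff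
    have hdiv : ContDiffOn ℝ 2 (fun x : Fin 2 → ℝ => x 1 / x 0) {x | x 0 ≠ 0} :=
      h1c.contDiffOn.div h0c.contDiffOn (fun x hx => hx)
    have harc : ContDiffOn ℝ 2 (fun x : Fin 2 → ℝ => Real.arctan (x 1 / x 0)) {x | x 0 ≠ 0} :=
      (Real.contDiff_arctan.of_le le_top).comp_contDiffOn hdiv
    exact contDiffOn_const.add (contDiffOn_const.mul harc)
  · intro x hx
    have hx : x 0 ≠ 0 := hx
    have hr : x 0 ^ 2 + x 1 ^ 2 ≠ 0 := by positivity
    have hev0 : pd f 0 =ᶠ[nhds x] qf 0 (-b) := by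
      filter_upwards [hΩ.mem_nhds hx] with y hy
      rw [pdf0 a b y hy, qf]; ring
    have hev1 : pd f 1 =ᶠ[nhds x] qf b 0 := by
      filter_upwards [hΩ.mem_nhds hx] with y hy
      rw [pdf1 a b y hy, qf]; ring
    have hsnd0 : ∀ i, pd (pd f 0) i x = pd (qf 0 (-b)) i x := by
      intro i; simp only [pd]; rw [hev0.fderiv_eq]
    have hsnd1 : ∀ i, pd (pd f 1) i x = pd (qf b 0) i x := by
      intro i; simp only [pd]; rw [hev1.fderiv_eq]
    constructor
    · simp only [lap, Fin.sum_univ_two]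
      rw [hsnd0 0, hsnd1 1, pdq0 0 (-b) x hr, pdq1 b 0 x hr]
      field_simp
      ring
    · simp only [infLap, Fin.sum_univ_two]
      rw [hsnd0 0, hsnd0 1, hsnd1 0, hsnd1 1,
        pdq0 0 (-b) x hr, pdq1 0 (-b) x hr, pdq0 b 0 x hr, pdq1 b 0 x hr,
        pdf0 a b x hx, pdf1 a b x hx]
      field_simp
      ring

end
end

section
/- If f is perfectly harmonic on an open set Ω ⊆ ℝ^N, then the function h(x, s, t) = f(x) − arctan(t/s) is perfectly harmonic on the open set Ω × {(s,t) ∈ ℝ² : s ≠ 0} ⊆ ℝ^{N+2}. -/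
noncomputable section

namespace PHaux

open Real Filter ContinuousLinearMap

variable {N : ℕ}

lemma castAdd_ne_natAdd (j : Fin N) (k : Fin 2) :
    Fin.castAdd 2 j ≠ Fin.natAdd N k := by
  intro h
  have := congrArg Fin.val h
  simp only [Fin.coe_castAdd, Fin.coe_natAdd] at this
  omega

@[simp] lemma single_castAdd_natAdd (j : Fin N) (k : Fin 2) :
    (Pi.single (Fin.castAdd 2 j) 1 : Fin (N+2) → ℝ) (Fin.natAdd N k) = 0 := by
  rw [Pi.single_apply, if_neg (Ne.symm (castAdd_ne_natAdd j k))]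

@[simp] lemma single_natAdd_castAdd (k : Fin 2) (j : Fin N) :
    (Pi.single (Fin.natAdd N k) 1 : Fin (N+2) → ℝ) (Fin.castAdd 2 j) = 0 := by
  rw [Pi.single_apply, if_neg (castAdd_ne_natAdd j k)]

@[simp] lemma single_natAdd_natAdd (k k' : Fin 2) :
    (Pi.single (Fin.natAdd N k) 1 : Fin (N+2) → ℝ) (Fin.natAdd N k') = if k' = k then 1 else 0 := by
  rw [Pi.single_apply]
  congr 1
  apply propext
  constructor <;> intro h
  · have := congrArg Fin.val h
    simp only [Fin.coe_natAdd] at this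
    exact Fin.ext (by omega)
  · exact congrArg _ h

/-- Projection onto the first `N` coordinates. -/
def pL (N : ℕ) : (Fin (N+2) → ℝ) →L[ℝ] (Fin N → ℝ) :=
  ContinuousLinearMap.pi fun j => ContinuousLinearMap.proj (Fin.castAdd 2 j)

@[simp] lemma pL_apply (x : Fin (N+2) → ℝ) (i : Fin N) : pL N x i = x (Fin.castAdd 2 i) := rfl

lemma pL_eq (x : Fin (N+2) → ℝ) : pL N x = fun i => x (Fin.castAdd 2 i) := rfl

@[simp] lemma pL_single_castAdd (j : Fin N) :
    pL N (Pi.single (Fin.castAdd 2 j) (1:ℝ)) = Pi.single j 1 := by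
  funext i
  simp [Pi.single_apply, (Fin.castAdd_injective N 2).eq_iff]

@[simp] lemma pL_single_natAdd (k : Fin 2) :
    pL N (Pi.single (Fin.natAdd N k) (1:ℝ)) = 0 := by
  funext i
  simp


/-- the 2D function `t/s` -/
def q (N : ℕ) : (Fin (N+2) → ℝ) → ℝ := fun y => y (Fin.natAdd N 1) / y (Fin.natAdd N 0)

/-- derivative of `q` -/
def Qc (x : Fin (N+2) → ℝ) : (Fin (N+2) → ℝ) →L[ℝ] ℝ :=
  x (Fin.natAdd N 1) • ((-(x (Fin.natAdd N 0) ^ 2)⁻¹) • proj (Fin.natAdd N 0)) +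
    (x (Fin.natAdd N 0))⁻¹ • proj (Fin.natAdd N 1)

lemma hasFDerivAt_q (x : Fin (N+2) → ℝ) (hx : x (Fin.natAdd N 0) ≠ 0) :
    HasFDerivAt (q N) (Qc x) x := by
  have h1 : HasFDerivAt (fun y : Fin (N+2) → ℝ => y (Fin.natAdd N 1))
      (proj (R := ℝ) (φ := fun _ => ℝ) (Fin.natAdd N 1)) x := hasFDerivAt_apply _ x
  have h0 : HasFDerivAt (fun y : Fin (N+2) → ℝ => y (Fin.natAdd N 0))
      (proj (R := ℝ) (φ := fun _ => ℝ) (Fin.natAdd N 0)) x := hasFDerivAt_apply _ x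
  have h2 : HasFDerivAt (fun y : Fin (N+2) → ℝ => (y (Fin.natAdd N 0))⁻¹)
      ((-(x (Fin.natAdd N 0) ^ 2)⁻¹) • proj (Fin.natAdd N 0)) x :=
    (hasDerivAt_inv hx).comp_hasFDerivAt x h0
  have := h1.mul h2
  have heq : (fun y : Fin (N+2) → ℝ => y (Fin.natAdd N 1) * (y (Fin.natAdd N 0))⁻¹) = q N := by
    funext y; rw [q, div_eq_mul_inv]
  rw [← heq]
  exact this

/-- The main function. -/
def Hf (f : (Fin N → ℝ) → ℝ) : (Fin (N+2) → ℝ) → ℝ := fun x =>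
  f (fun i => x (Fin.castAdd 2 i)) - Real.arctan (x (Fin.natAdd N 1) / x (Fin.natAdd N 0))

/-- derivative of `Hf` -/
def Dc (f : (Fin N → ℝ) → ℝ) (x : Fin (N+2) → ℝ) : (Fin (N+2) → ℝ) →L[ℝ] ℝ :=
  (fderiv ℝ f (pL N x)).comp (pL N) - (1 / (1 + q N x ^ 2)) • Qc x

lemma hasFDerivAt_Hf {f : (Fin N → ℝ) → ℝ} (x : Fin (N+2) → ℝ)
    (hd : DifferentiableAt ℝ f (pL N x)) (hx : x (Fin.natAdd N 0) ≠ 0) :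
    HasFDerivAt (Hf f) (Dc f x) x := by
  have h1 : HasFDerivAt (fun y => f (pL N y)) ((fderiv ℝ f (pL N x)).comp (pL N)) x :=
    hd.hasFDerivAt.comp x (pL N).hasFDerivAt
  have h2 := (hasFDerivAt_q x hx).arctan
  exact h1.sub h2


/-- generic 2D rational function `(α s + β t)/(s²+t²)` in the last two coordinates -/
def g2 (N : ℕ) (α β : ℝ) : (Fin (N+2) → ℝ) → ℝ := fun y =>
  (α * y (Fin.natAdd N 0) + β * y (Fin.natAdd N 1)) *
    (y (Fin.natAdd N 0) * y (Fin.natAdd N 0) + y (Fin.natAdd N 1) * y (Fin.natAdd N 1))⁻¹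

/-- derivative of `g2` -/
def G2 (α β : ℝ) (x : Fin (N+2) → ℝ) : (Fin (N+2) → ℝ) →L[ℝ] ℝ :=
  (α * x (Fin.natAdd N 0) + β * x (Fin.natAdd N 1)) •
    ((-((x (Fin.natAdd N 0) * x (Fin.natAdd N 0) +
        x (Fin.natAdd N 1) * x (Fin.natAdd N 1)) ^ 2)⁻¹) •
      ((x (Fin.natAdd N 0) • proj (Fin.natAdd N 0) + x (Fin.natAdd N 0) • proj (Fin.natAdd N 0)) +
       (x (Fin.natAdd N 1) • proj (Fin.natAdd N 1) + x (Fin.natAdd N 1) • proj (Fin.natAdd N 1)))) +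
  (x (Fin.natAdd N 0) * x (Fin.natAdd N 0) + x (Fin.natAdd N 1) * x (Fin.natAdd N 1))⁻¹ •
    (α • proj (Fin.natAdd N 0) + β • proj (Fin.natAdd N 1))

lemma den_ne (x : Fin (N+2) → ℝ) (hx : x (Fin.natAdd N 0) ≠ 0) :
    x (Fin.natAdd N 0) * x (Fin.natAdd N 0) + x (Fin.natAdd N 1) * x (Fin.natAdd N 1) ≠ 0 := by
  have h1 : 0 < x (Fin.natAdd N 0) * x (Fin.natAdd N 0) := mul_self_pos.2 hx
  have h2 : 0 ≤ x (Fin.natAdd N 1) * x (Fin.natAdd N 1) := mul_self_nonneg _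
  positivity

lemma hasFDerivAt_g2 (α β : ℝ) (x : Fin (N+2) → ℝ) (hx : x (Fin.natAdd N 0) ≠ 0) :
    HasFDerivAt (g2 N α β) (G2 α β x) x := by
  have h1 : HasFDerivAt (fun y : Fin (N+2) → ℝ => y (Fin.natAdd N 1))
      (proj (R := ℝ) (φ := fun _ => ℝ) (Fin.natAdd N 1)) x := hasFDerivAt_apply _ x
  have h0 : HasFDerivAt (fun y : Fin (N+2) → ℝ => y (Fin.natAdd N 0))
      (proj (R := ℝ) (φ := fun _ => ℝ) (Fin.natAdd N 0)) x := hasFDerivAt_apply _ x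
  have hnum := (h0.const_mul α).add (h1.const_mul β)
  have hden := (h0.mul h0).add (h1.mul h1)
  have hinv := (hasDerivAt_inv (den_ne x hx)).comp_hasFDerivAt x hden
  exact hnum.mul hinv

lemma pd_g2_castAdd (α β : ℝ) (x : Fin (N+2) → ℝ) (hx : x (Fin.natAdd N 0) ≠ 0) (j : Fin N) :
    pd (g2 N α β) (Fin.castAdd 2 j) x = 0 := by
  rw [pd, (hasFDerivAt_g2 α β x hx).fderiv]
  simp [G2]

lemma pd_g2_nat0 (α β : ℝ) (x : Fin (N+2) → ℝ) (hx : x (Fin.natAdd N 0) ≠ 0) :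
    pd (g2 N α β) (Fin.natAdd N 0) x =
      (α * (x (Fin.natAdd N 0) * x (Fin.natAdd N 0) + x (Fin.natAdd N 1) * x (Fin.natAdd N 1)) -
        (α * x (Fin.natAdd N 0) + β * x (Fin.natAdd N 1)) * (2 * x (Fin.natAdd N 0))) /
      (x (Fin.natAdd N 0) * x (Fin.natAdd N 0) + x (Fin.natAdd N 1) * x (Fin.natAdd N 1)) ^ 2 := by
  rw [pd, (hasFDerivAt_g2 α β x hx).fderiv]
  have hR := den_ne x hx
  simp [G2]
  field_simp
  ring

lemma pd_g2_nat1 (α β : ℝ) (x : Fin (N+2) → ℝ) (hx : x (Fin.natAdd N 0) ≠ 0) :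
    pd (g2 N α β) (Fin.natAdd N 1) x =
      (β * (x (Fin.natAdd N 0) * x (Fin.natAdd N 0) + x (Fin.natAdd N 1) * x (Fin.natAdd N 1)) -
        (α * x (Fin.natAdd N 0) + β * x (Fin.natAdd N 1)) * (2 * x (Fin.natAdd N 1))) /
      (x (Fin.natAdd N 0) * x (Fin.natAdd N 0) + x (Fin.natAdd N 1) * x (Fin.natAdd N 1)) ^ 2 := by
  rw [pd, (hasFDerivAt_g2 α β x hx).fderiv]
  have hR := den_ne x hx
  simp [G2]
  field_simp
  ring


variable {f : (Fin N → ℝ) → ℝ} {Ω : Set (Fin N → ℝ)}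

lemma one_plus_q_sq_ne (x : Fin (N+2) → ℝ) : 1 + q N x ^ 2 ≠ 0 := by positivity

lemma pd_Hf_castAdd (x : Fin (N+2) → ℝ) (hd : DifferentiableAt ℝ f (pL N x))
    (hx : x (Fin.natAdd N 0) ≠ 0) (j : Fin N) :
    pd (Hf f) (Fin.castAdd 2 j) x = pd f j (pL N x) := by
  rw [pd, (hasFDerivAt_Hf x hd hx).fderiv]
  simp [Dc, Qc, pd]

lemma pd_Hf_nat0 (x : Fin (N+2) → ℝ) (hd : DifferentiableAt ℝ f (pL N x))
    (hx : x (Fin.natAdd N 0) ≠ 0) :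
    pd (Hf f) (Fin.natAdd N 0) x = g2 N 0 1 x := by
  rw [pd, (hasFDerivAt_Hf x hd hx).fderiv]
  have h1 : 1 + q N x ^ 2 ≠ 0 := one_plus_q_sq_ne x
  have hR := den_ne x hx
  simp only [q] at h1
  simp [Dc, Qc, g2, q]
  field_simp

lemma pd_Hf_nat1 (x : Fin (N+2) → ℝ) (hd : DifferentiableAt ℝ f (pL N x))
    (hx : x (Fin.natAdd N 0) ≠ 0) :
    pd (Hf f) (Fin.natAdd N 1) x = g2 N (-1) 0 x := by
  rw [pd, (hasFDerivAt_Hf x hd hx).fderiv]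
  have h1 : 1 + q N x ^ 2 ≠ 0 := one_plus_q_sq_ne x
  have hR := den_ne x hx
  simp only [q] at h1
  simp [Dc, Qc, g2, q]
  field_simp

lemma contDiffOn_pd (hf : ContDiffOn ℝ 2 f Ω) (hΩ : IsOpen Ω) (j : Fin N) :
    ContDiffOn ℝ 1 (pd f j) Ω := by
  have h1 : ContDiffOn ℝ 1 (fderiv ℝ f) Ω := hf.fderiv_of_isOpen hΩ (by norm_num)
  exact (ContinuousLinearMap.apply ℝ ℝ (Pi.single j (1:ℝ))).contDiff.comp_contDiffOn h1

lemma hasFDerivAt_fcomp (hf : ContDiffOn ℝ 2 f Ω) (hΩ : IsOpen Ω) (j : Fin N)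
    (x : Fin (N+2) → ℝ) (hx : pL N x ∈ Ω) :
    HasFDerivAt (fun y => pd f j (pL N y))
      ((fderiv ℝ (pd f j) (pL N x)).comp (pL N)) x := by
  have h3 : DifferentiableAt ℝ (pd f j) (pL N x) :=
    (((contDiffOn_pd hf hΩ j).differentiableOn one_ne_zero) (pL N x) hx).differentiableAt
      (hΩ.mem_nhds hx)
  exact h3.hasFDerivAt.comp x (pL N).hasFDerivAt

lemma pd_fcomp_castAdd (hf : ContDiffOn ℝ 2 f Ω) (hΩ : IsOpen Ω) (j j' : Fin N)
    (x : Fin (N+2) → ℝ) (hx : pL N x ∈ Ω) :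
    pd (fun y => pd f j (pL N y)) (Fin.castAdd 2 j') x = pd (pd f j) j' (pL N x) := by
  rw [pd, (hasFDerivAt_fcomp hf hΩ j x hx).fderiv]
  simp [pd]

lemma pd_fcomp_natAdd (hf : ContDiffOn ℝ 2 f Ω) (hΩ : IsOpen Ω) (j : Fin N) (k : Fin 2)
    (x : Fin (N+2) → ℝ) (hx : pL N x ∈ Ω) :
    pd (fun y => pd f j (pL N y)) (Fin.natAdd N k) x = 0 := by
  rw [pd, (hasFDerivAt_fcomp hf hΩ j x hx).fderiv]
  simp


/-- The open set on which we work. -/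
def S (Ω : Set (Fin N → ℝ)) : Set (Fin (N+2) → ℝ) :=
  {x | pL N x ∈ Ω ∧ x (Fin.natAdd N 0) ≠ 0}

lemma isOpen_S (hΩ : IsOpen Ω) : IsOpen (S Ω) := by
  have h1 : IsOpen ((pL N) ⁻¹' Ω) := hΩ.preimage (pL N).continuous
  have h2 : IsOpen {x : Fin (N+2) → ℝ | x (Fin.natAdd N 0) ≠ 0} :=
    isOpen_compl_singleton.preimage (continuous_apply (Fin.natAdd N 0))
  exact h1.inter h2

lemma diffAt_of_mem (hf : ContDiffOn ℝ 2 f Ω) (hΩ : IsOpen Ω) {y : Fin (N+2) → ℝ}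
    (hy : pL N y ∈ Ω) : DifferentiableAt ℝ f (pL N y) :=
  (((hf.differentiableOn (by norm_num)) _ hy).differentiableAt (hΩ.mem_nhds hy))

lemma pd2_Hf_cast (hf : ContDiffOn ℝ 2 f Ω) (hΩ : IsOpen Ω) {x : Fin (N+2) → ℝ}
    (hx : x ∈ S Ω) (j : Fin N) (i : Fin (N+2)) :
    pd (pd (Hf f) (Fin.castAdd 2 j)) i x = pd (fun y => pd f j (pL N y)) i x := by
  have hev : pd (Hf f) (Fin.castAdd 2 j) =ᶠ[nhds x] fun y => pd f j (pL N y) := by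
    filter_upwards [(isOpen_S hΩ).mem_nhds hx] with y hy
    exact pd_Hf_castAdd y (diffAt_of_mem hf hΩ hy.1) hy.2 j
  rw [pd, hev.fderiv_eq, pd]

lemma pd2_Hf_nat0 (hf : ContDiffOn ℝ 2 f Ω) (hΩ : IsOpen Ω) {x : Fin (N+2) → ℝ}
    (hx : x ∈ S Ω) (i : Fin (N+2)) :
    pd (pd (Hf f) (Fin.natAdd N 0)) i x = pd (g2 N 0 1) i x := by
  have hev : pd (Hf f) (Fin.natAdd N 0) =ᶠ[nhds x] g2 N 0 1 := by
    filter_upwards [(isOpen_S hΩ).mem_nhds hx] with y hy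
    exact pd_Hf_nat0 y (diffAt_of_mem hf hΩ hy.1) hy.2
  rw [pd, hev.fderiv_eq, pd]

lemma pd2_Hf_nat1 (hf : ContDiffOn ℝ 2 f Ω) (hΩ : IsOpen Ω) {x : Fin (N+2) → ℝ}
    (hx : x ∈ S Ω) (i : Fin (N+2)) :
    pd (pd (Hf f) (Fin.natAdd N 1)) i x = pd (g2 N (-1) 0) i x := by
  have hev : pd (Hf f) (Fin.natAdd N 1) =ᶠ[nhds x] g2 N (-1) 0 := by
    filter_upwards [(isOpen_S hΩ).mem_nhds hx] with y hy
    exact pd_Hf_nat1 y (diffAt_of_mem hf hΩ hy.1) hy.2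
  rw [pd, hev.fderiv_eq, pd]

lemma contDiffOn_Hf (hf : ContDiffOn ℝ 2 f Ω) : ContDiffOn ℝ 2 (Hf f) (S Ω) := by
  have c1 : ContDiffOn ℝ 2 (fun y => f (pL N y)) (S Ω) :=
    hf.comp ((pL N).contDiff.contDiffOn) (fun y hy => hy.1)
  have c2 : ContDiffOn ℝ 2 (fun y : Fin (N+2) → ℝ =>
      Real.arctan (y (Fin.natAdd N 1) / y (Fin.natAdd N 0))) (S Ω) := by
    intro y hy
    apply ContDiffAt.contDiffWithinAt
    have hq : ContDiffAt ℝ 2 (fun z : Fin (N+2) → ℝ =>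
        z (Fin.natAdd N 1) / z (Fin.natAdd N 0)) y :=
      ContDiffAt.div ((contDiff_apply ℝ ℝ _).contDiffAt) ((contDiff_apply ℝ ℝ _).contDiffAt) hy.2
    exact (Real.contDiff_arctan.contDiffAt).comp y hq
  exact c1.sub c2

end PHaux

/-- If `f` is perfectly harmonic on an open `Ω ⊆ ℝ^N`, then
`h(x,s,t) = f(x) − arctan(t/s)` is perfectly harmonic on
`Ω × {(s,t) : s ≠ 0} ⊆ ℝ^(N+2)`. -/


theorem perfectlyHarmonic_sub_arctan {N : ℕ}
    (f : (Fin N → ℝ) → ℝ) (Ω : Set (Fin N → ℝ)) (hΩ : IsOpen Ω)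
    (hf : PerfectlyHarmonic f Ω) :
    PerfectlyHarmonic
      (fun x : Fin (N + 2) → ℝ =>
        f (fun i => x (Fin.castAdd 2 i)) -
          Real.arctan (x (Fin.natAdd N 1) / x (Fin.natAdd N 0)))
      {x : Fin (N + 2) → ℝ |
        (fun i => x (Fin.castAdd 2 i)) ∈ Ω ∧ x (Fin.natAdd N 0) ≠ 0} := by
  obtain ⟨hf2, hfh⟩ := hf
  have key : PerfectlyHarmonic (PHaux.Hf f) (PHaux.S Ω) := by
    constructor
    · exact PHaux.contDiffOn_Hf hf2
    · intro x hx
      have hu : x (Fin.natAdd N 0) ≠ 0 := hx.2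
      have hΩx : PHaux.pL N x ∈ Ω := hx.1
      have hd : DifferentiableAt ℝ f (PHaux.pL N x) := PHaux.diffAt_of_mem hf2 hΩ hΩx
      have hR := PHaux.den_ne x hu
      obtain ⟨hlapf, hinff⟩ := hfh (PHaux.pL N x) hΩx
      have hc : ∀ j : Fin N, pd (PHaux.Hf f) (Fin.castAdd 2 j) x = pd f j (PHaux.pL N x) :=
        fun j => PHaux.pd_Hf_castAdd x hd hu j
      have h0 : pd (PHaux.Hf f) (Fin.natAdd N 0) x = PHaux.g2 N 0 1 x :=
        PHaux.pd_Hf_nat0 x hd hu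
      have h1 : pd (PHaux.Hf f) (Fin.natAdd N 1) x = PHaux.g2 N (-1) 0 x :=
        PHaux.pd_Hf_nat1 x hd hu
      have hcc : ∀ j j' : Fin N,
          pd (pd (PHaux.Hf f) (Fin.castAdd 2 j')) (Fin.castAdd 2 j) x
            = pd (pd f j') j (PHaux.pL N x) := fun j j' => by
        rw [PHaux.pd2_Hf_cast hf2 hΩ hx j', PHaux.pd_fcomp_castAdd hf2 hΩ j' j x hΩx]
      have hcn : ∀ (j : Fin N) (k : Fin 2),
          pd (pd (PHaux.Hf f) (Fin.castAdd 2 j)) (Fin.natAdd N k) x = 0 := fun j k => by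
        rw [PHaux.pd2_Hf_cast hf2 hΩ hx j, PHaux.pd_fcomp_natAdd hf2 hΩ j k x hΩx]
      have hnc0 : ∀ j : Fin N,
          pd (pd (PHaux.Hf f) (Fin.natAdd N 0)) (Fin.castAdd 2 j) x = 0 := fun j => by
        rw [PHaux.pd2_Hf_nat0 hf2 hΩ hx, PHaux.pd_g2_castAdd 0 1 x hu j]
      have hnc1 : ∀ j : Fin N,
          pd (pd (PHaux.Hf f) (Fin.natAdd N 1)) (Fin.castAdd 2 j) x = 0 := fun j => by
        rw [PHaux.pd2_Hf_nat1 hf2 hΩ hx, PHaux.pd_g2_castAdd (-1) 0 x hu j]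
      have hnn00 := (PHaux.pd2_Hf_nat0 hf2 hΩ hx (Fin.natAdd N 0)).trans
        (PHaux.pd_g2_nat0 0 1 x hu)
      have hnn01 := (PHaux.pd2_Hf_nat0 hf2 hΩ hx (Fin.natAdd N 1)).trans
        (PHaux.pd_g2_nat1 0 1 x hu)
      have hnn10 := (PHaux.pd2_Hf_nat1 hf2 hΩ hx (Fin.natAdd N 0)).trans
        (PHaux.pd_g2_nat0 (-1) 0 x hu)
      have hnn11 := (PHaux.pd2_Hf_nat1 hf2 hΩ hx (Fin.natAdd N 1)).trans
        (PHaux.pd_g2_nat1 (-1) 0 x hu)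
      constructor
      · -- Laplacian
        unfold lap
        rw [Fin.sum_univ_add]
        have eA : (∑ j : Fin N,
            pd (pd (PHaux.Hf f) (Fin.castAdd 2 j)) (Fin.castAdd 2 j) x)
            = lap f (PHaux.pL N x) := by
          unfold lap
          exact Finset.sum_congr rfl fun j _ => hcc j j
        rw [eA, hlapf, Fin.sum_univ_two, hnn00, hnn11]
        field_simp
        ring
      · -- ∞-Laplacian
        unfold infLap
        simp only [Fin.sum_univ_add, Fin.sum_univ_two]
        simp only [hc, h0, h1, hcn, hnc0, hnc1, hnn00, hnn01, hnn10, hnn11, hcc,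
          mul_zero, zero_mul, Finset.sum_const_zero, add_zero, zero_add]
        unfold infLap at hinff
        rw [hinff]
        simp only [PHaux.g2, zero_add]
        field_simp
        ring
  exact key


end
end

section
/- Let Ω ⊆ ℝ^N be open, let u be a C² function on Ω, and let v be a C² function on Ω with v(x) ≠ 0 for all x ∈ Ω. Then there exists a continuous function μ on Ω with Δ₁u = μ·u on Ω if and only if there exists a continuous function ν on Ω with Δ₁(u·v) = ν·(u·v) on Ω. -/
noncomputable section

/-- The auxiliary "remainder" term `q i j` in the expansion of `Δ₁(uv) − v³Δ₁u`. -/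
noncomputable def qterm {N : ℕ} (u v : (Fin N → ℝ) → ℝ) (i j : Fin N) (x : Fin N → ℝ) : ℝ :=
  2 * v x ^ 2 * pd u i x * pd v i x * pd (pd u j) j x
  - v x ^ 2 * (pd u i x * pd v j x + pd u j x * pd v i x) * pd (pd u j) i x
  - v x ^ 2 * pd u i x * pd u j x * pd (pd v j) i x
  + v x ^ 2 * pd u i x ^ 2 * pd (pd v j) j x
  + u x * v x * (pd v i x ^ 2 * pd (pd u j) j x - pd v i x * pd v j x * pd (pd u j) i x
      - (pd u i x * pd v j x + pd u j x * pd v i x) * pd (pd v j) i x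
      + 2 * pd u i x * pd v i x * pd (pd v j) j x)
  + u x ^ 2 * (pd v i x ^ 2 * pd (pd v j) j x - pd v i x * pd v j x * pd (pd v j) i x)
  - v x * (pd u i x * pd v j x - pd u j x * pd v i x) ^ 2
  + u x * pd v i x * pd v j x * (pd u j x * pd v i x - pd u i x * pd v j x)

/-- The remainder `R = Σᵢⱼ q i j`, so that `Δ₁(uv) = v³Δ₁u + uR`. -/
noncomputable def Rfun {N : ℕ} (u v : (Fin N → ℝ) → ℝ) (x : Fin N → ℝ) : ℝ :=
  ∑ i, ∑ j, qterm u v i j x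

section aux

variable {N : ℕ} {Ω : Set (Fin N → ℝ)} (hΩ : IsOpen Ω)
variable {u v : (Fin N → ℝ) → ℝ}
include hΩ

lemma contDiffOn_pd_one (hu : ContDiffOn ℝ 2 u Ω) (i : Fin N) :
    ContDiffOn ℝ 1 (pd u i) Ω := by
  have h := hu.fderiv_of_isOpen (m := 1) hΩ (by norm_num)
  exact h.clm_apply contDiffOn_const

lemma continuousOn_pd (hu : ContDiffOn ℝ 2 u Ω) (i : Fin N) :
    ContinuousOn (pd u i) Ω :=
  (contDiffOn_pd_one hΩ hu i).continuousOn

lemma continuousOn_pd_pd (hu : ContDiffOn ℝ 2 u Ω) (i j : Fin N) :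
    ContinuousOn (pd (pd u j) i) Ω := by
  have h := (contDiffOn_pd_one hΩ hu j).fderiv_of_isOpen (m := 0) hΩ (by norm_num)
  exact (h.clm_apply contDiffOn_const).continuousOn

lemma differentiableAt_of_c2 (hu : ContDiffOn ℝ 2 u Ω) {x : Fin N → ℝ} (hx : x ∈ Ω) :
    DifferentiableAt ℝ u x :=
  ((hu.differentiableOn (by norm_num)).differentiableAt (hΩ.mem_nhds hx))

lemma differentiableAt_pd (hu : ContDiffOn ℝ 2 u Ω) {x : Fin N → ℝ} (hx : x ∈ Ω) (i : Fin N) :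
    DifferentiableAt ℝ (pd u i) x :=
  (((contDiffOn_pd_one hΩ hu i).differentiableOn one_ne_zero).differentiableAt (hΩ.mem_nhds hx))

omit hΩ in
lemma pd_mul {x : Fin N → ℝ} (hu : DifferentiableAt ℝ u x) (hv : DifferentiableAt ℝ v x)
    (i : Fin N) :
    pd (fun y => u y * v y) i x = pd u i x * v x + u x * pd v i x := by
  unfold pd
  rw [fderiv_fun_mul hu hv]
  simp [smul_eq_mul]
  ring

lemma pd_pd_mul (hu : ContDiffOn ℝ 2 u Ω) (hv : ContDiffOn ℝ 2 v Ω)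
    {x : Fin N → ℝ} (hx : x ∈ Ω) (i j : Fin N) :
    pd (pd (fun y => u y * v y) j) i x =
      pd (pd u j) i x * v x + pd u j x * pd v i x + pd u i x * pd v j x
        + u x * pd (pd v j) i x := by
  have heq : pd (fun y => u y * v y) j =ᶠ[nhds x]
      (fun y => pd u j y * v y + u y * pd v j y) := by
    filter_upwards [hΩ.mem_nhds hx] with y hy
    exact pd_mul (differentiableAt_of_c2 hΩ hu hy) (differentiableAt_of_c2 hΩ hv hy) j
  have d1 : DifferentiableAt ℝ (pd u j) x := differentiableAt_pd hΩ hu hx j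
  have d2 : DifferentiableAt ℝ v x := differentiableAt_of_c2 hΩ hv hx
  have d3 : DifferentiableAt ℝ u x := differentiableAt_of_c2 hΩ hu hx
  have d4 : DifferentiableAt ℝ (pd v j) x := differentiableAt_pd hΩ hv hx j
  have e1 : pd (pd (fun y => u y * v y) j) i x
      = fderiv ℝ (fun y => pd u j y * v y + u y * pd v j y) x (Pi.single i 1) := by
    rw [pd, heq.fderiv_eq]
  rw [e1, fderiv_fun_add (f := fun y => pd u j y * v y) (g := fun y => u y * pd v j y) (d1.mul d2) (d3.mul d4), fderiv_fun_mul d1 d2, fderiv_fun_mul d3 d4]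
  simp [smul_eq_mul, pd]
  ring

/-- Key identity: `Δ₁(uv) = v³ Δ₁u + u·R`. -/
lemma lap1_mul (hu : ContDiffOn ℝ 2 u Ω) (hv : ContDiffOn ℝ 2 v Ω)
    {x : Fin N → ℝ} (hx : x ∈ Ω) :
    lap1 (fun y => u y * v y) x = v x ^ 3 * lap1 u x + u x * Rfun u v x := by
  set w := fun y => u y * v y with hw
  have h1 : ∀ i, pd w i x = pd u i x * v x + u x * pd v i x := fun i =>
    pd_mul (differentiableAt_of_c2 hΩ hu hx) (differentiableAt_of_c2 hΩ hv hx) i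
  have h2 : ∀ i j, pd (pd w j) i x =
      pd (pd u j) i x * v x + pd u j x * pd v i x + pd u i x * pd v j x
        + u x * pd (pd v j) i x := fun i j => pd_pd_mul hΩ hu hv hx i j
  have expand : ∀ f : (Fin N → ℝ) → ℝ, lap1 f x =
      ∑ i, ∑ j, (pd f i x ^ 2 * pd (pd f j) j x
        - pd f i x * pd f j x * pd (pd f j) i x) := by
    intro f
    unfold lap1 lap infLap
    rw [Finset.sum_mul_sum]
    rw [← Finset.sum_sub_distrib]
    exact Finset.sum_congr rfl fun i _ => (Finset.sum_sub_distrib _ _).symm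
  have key : ∀ i j, pd w i x ^ 2 * pd (pd w j) j x
      - pd w i x * pd w j x * pd (pd w j) i x
      = v x ^ 3 * (pd u i x ^ 2 * pd (pd u j) j x
          - pd u i x * pd u j x * pd (pd u j) i x)
        + u x * qterm u v i j x
        + (v x ^ 2 * (pd u i x ^ 2 * (pd u j x * pd v j x))
            - v x ^ 2 * (pd u j x ^ 2 * (pd u i x * pd v i x))) := by
    intro i j
    rw [h1 i, h1 j, h2 i j, h2 j j]
    unfold qterm
    ring
  have hanti : ∑ i : Fin N, ∑ j : Fin N,
      (v x ^ 2 * (pd u i x ^ 2 * (pd u j x * pd v j x))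
        - v x ^ 2 * (pd u j x ^ 2 * (pd u i x * pd v i x))) = 0 := by
    have : ∑ i : Fin N, ∑ j : Fin N, v x ^ 2 * (pd u j x ^ 2 * (pd u i x * pd v i x))
        = ∑ i : Fin N, ∑ j : Fin N, v x ^ 2 * (pd u i x ^ 2 * (pd u j x * pd v j x)) :=
      Finset.sum_comm
    simp only [Finset.sum_sub_distrib, this, sub_self]
  calc lap1 w x
      = ∑ i, ∑ j, (pd w i x ^ 2 * pd (pd w j) j x
        - pd w i x * pd w j x * pd (pd w j) i x) := expand w
    _ = ∑ i, ∑ j, (v x ^ 3 * (pd u i x ^ 2 * pd (pd u j) j x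
          - pd u i x * pd u j x * pd (pd u j) i x)
        + u x * qterm u v i j x
        + (v x ^ 2 * (pd u i x ^ 2 * (pd u j x * pd v j x))
            - v x ^ 2 * (pd u j x ^ 2 * (pd u i x * pd v i x)))) := by
        exact Finset.sum_congr rfl fun i _ => Finset.sum_congr rfl fun j _ => key i j
    _ = v x ^ 3 * lap1 u x + u x * Rfun u v x := by
        simp only [Finset.sum_add_distrib, ← Finset.mul_sum, hanti, add_zero]
        rw [expand u]
        rfl

set_option maxHeartbeats 1600000 in
lemma continuousOn_Rfun (hu : ContDiffOn ℝ 2 u Ω) (hv : ContDiffOn ℝ 2 v Ω) :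
    ContinuousOn (Rfun u v) Ω := by
  apply continuousOn_finset_sum
  intro i _
  apply continuousOn_finset_sum
  intro j _
  have cu := hu.continuousOn
  have cv := hv.continuousOn
  have cpu := fun k => continuousOn_pd hΩ hu k
  have cpv := fun k => continuousOn_pd hΩ hv k
  have cppu := fun k l => continuousOn_pd_pd hΩ hu k l
  have cppv := fun k l => continuousOn_pd_pd hΩ hv k l
  unfold qterm
  repeat' first
    | exact cu
    | exact cv
    | exact cpu _
    | exact cpv _
    | exact cppu _ _
    | exact cppv _ _
    | exact continuousOn_const
    | apply ContinuousOn.neg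
    | apply ContinuousOn.add
    | apply ContinuousOn.sub
    | apply ContinuousOn.mul


end aux

/-- `u` is an eigenfunction of `Δ₁` with continuous weight iff `u·v` is, for any
nonvanishing C² function `v`. -/
theorem eigen_lap1_mul_iff {N : ℕ} (Ω : Set (Fin N → ℝ)) (hΩ : IsOpen Ω)
    (u v : (Fin N → ℝ) → ℝ)
    (hu : ContDiffOn ℝ 2 u Ω) (hv : ContDiffOn ℝ 2 v Ω)
    (hvne : ∀ x ∈ Ω, v x ≠ 0) :
    (∃ μ : (Fin N → ℝ) → ℝ, ContinuousOn μ Ω ∧ ∀ x ∈ Ω, lap1 u x = μ x * u x) ↔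
    (∃ ν : (Fin N → ℝ) → ℝ, ContinuousOn ν Ω ∧
      ∀ x ∈ Ω, lap1 (fun y => u y * v y) x = ν x * (u x * v x)) := by
  have hR := continuousOn_Rfun hΩ hu hv
  have hcv := hv.continuousOn
  constructor
  · rintro ⟨μ, hμc, hμ⟩
    refine ⟨fun x => v x ^ 2 * μ x + Rfun u v x / v x, ?_, ?_⟩
    · exact ((hcv.pow 2).mul hμc).add (hR.div hcv hvne)
    · intro x hx
      rw [lap1_mul hΩ hu hv hx, hμ x hx]
      field_simp [hvne x hx]
  · rintro ⟨ν, hνc, hν⟩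
    refine ⟨fun x => (ν x * v x - Rfun u v x) / v x ^ 3, ?_, ?_⟩
    · exact ((hνc.mul hcv).sub hR).div (hcv.pow 3) (fun x hx => pow_ne_zero 3 (hvne x hx))
    · intro x hx
      have h := lap1_mul hΩ hu hv hx
      rw [hν x hx] at h
      have hv3 : v x ^ 3 ≠ 0 := pow_ne_zero 3 (hvne x hx)
      field_simp
      rw [eq_div_iff hv3]
      linear_combination -h

end
end

section
/- Let u and v be orthogonal twin-harmonics on an open set Ω ⊆ ℝ^N and suppose u(x) ≠ 0 for all x ∈ Ω. Then the function f(x) = arctan(v(x)/u(x)) is perfectly harmonic on Ω, i.e. Δf = 0 and Δ_∞f = 0 at every point of Ω. -/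
noncomputable section

open Filter

/-- Pure algebra: the twin-harmonic identities kill both Laplacians of `arctan (v/u)`. -/
lemma twin_alg {N : ℕ} (a b : ℝ) (hab : a * a + b * b ≠ 0)
    (p q : Fin N → ℝ) (U V : Fin N → Fin N → ℝ)
    (h1 : b * (∑ i, U i i) = a * (∑ i, V i i))
    (h2 : b * (∑ i, ∑ j, p i * p j * U i j) = a * (∑ i, ∑ j, q i * q j * V i j))
    (h3 : (∑ i, p i ^ 2) = (∑ i, q i ^ 2))
    (h4 : (∑ i, p i * q i) = 0)
    (h5 : ∀ i, (∑ j, (p j * V i j + q j * U i j)) = 0)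
    (h6 : ∀ i, (∑ j, p j * U i j) = (∑ j, q j * V i j)) :
    (∑ i, ((p i * q i + a * V i i - (q i * p i + b * U i i)) * (a * a + b * b)
        - (a * q i - b * p i) * (2 * (a * p i) + 2 * (b * q i)))
        / ((a * a + b * b) * (a * a + b * b)) = 0)
    ∧ (∑ i, ∑ j, (a * q i - b * p i) / (a * a + b * b) *
        ((a * q j - b * p j) / (a * a + b * b)) *
        (((p i * q j + a * V i j - (q i * p j + b * U i j)) * (a * a + b * b)
        - (a * q j - b * p j) * (2 * (a * p i) + 2 * (b * q i)))
        / ((a * a + b * b) * (a * a + b * b))) = 0) := by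
  have h5' : ∀ i, (∑ j, p j * V i j) = -(∑ j, q j * U i j) := by
    intro i
    have := h5 i
    rw [Finset.sum_add_distrib] at this
    linarith
  constructor
  · have hnum : (∑ i, ((p i * q i + a * V i i - (q i * p i + b * U i i)) * (a * a + b * b)
        - (a * q i - b * p i) * (2 * (a * p i) + 2 * (b * q i)))) = 0 := by
      calc
        (∑ i, ((p i * q i + a * V i i - (q i * p i + b * U i i)) * (a * a + b * b)
            - (a * q i - b * p i) * (2 * (a * p i) + 2 * (b * q i))))
          = ∑ i, ((a * b * b + a * a * a) * V i i + (-(b * b * b) + -(a * a * b)) * U i i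
            + (2 * (b * b) + -(2 * (a * a))) * (p i * q i) + 2 * (a * b) * (p i ^ 2)
            + -(2 * (a * b)) * (q i ^ 2)) := Finset.sum_congr rfl fun i _ => by ring
        _ = (a * b * b + a * a * a) * (∑ i, V i i) + (-(b * b * b) + -(a * a * b)) * (∑ i, U i i)
            + (2 * (b * b) + -(2 * (a * a))) * (∑ i, p i * q i) + 2 * (a * b) * (∑ i, p i ^ 2)
            + -(2 * (a * b)) * (∑ i, q i ^ 2) := by
            simp only [Finset.sum_add_distrib, ← Finset.mul_sum]
        _ = 0 := by
            rw [h3, h4]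
            linear_combination (-(a * a + b * b)) * h1
    rw [← Finset.sum_div, hnum, zero_div]
  · have key : (∑ i, (a * q i - b * p i) * (∑ j, (a * q j - b * p j) *
        ((p i * q j + a * V i j - (q i * p j + b * U i j)) * (a * a + b * b)
        - (a * q j - b * p j) * (2 * (a * p i) + 2 * (b * q i))))) = 0 := by
      calc
        (∑ i, (a * q i - b * p i) * (∑ j, (a * q j - b * p j) *
            ((p i * q j + a * V i j - (q i * p j + b * U i j)) * (a * a + b * b)
            - (a * q j - b * p j) * (2 * (a * p i) + 2 * (b * q i)))))
          = ∑ i, (a * q i - b * p i) *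
              ((a * (b * b) * p i + -(2 * (a * a * b)) * q i + -(a * a * a) * p i) * (∑ j, q j ^ 2)
              + (-(b * b * b) * p i + 3 * (a * (b * b)) * q i + 3 * (a * a * b) * p i
                  + -(a * a * a) * q i) * (∑ j, p j * q j)
              + (-(b * b * b) * q i + -(2 * (a * (b * b))) * p i + a * a * b * q i) * (∑ j, p j ^ 2)
              + (a * a * (b * b) + a * a * (a * a)) * (∑ j, q j * V i j)
              + (-(a * (b * b * b)) + -(a * a * (a * b))) * (∑ j, p j * V i j)
              + (-(a * (b * b * b)) + -(a * a * (a * b))) * (∑ j, q j * U i j)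
              + (b * b * (b * b) + a * a * (b * b)) * (∑ j, p j * U i j)) := by
            refine Finset.sum_congr rfl fun i _ => ?_
            congr 1
            calc
              (∑ j, (a * q j - b * p j) *
                  ((p i * q j + a * V i j - (q i * p j + b * U i j)) * (a * a + b * b)
                  - (a * q j - b * p j) * (2 * (a * p i) + 2 * (b * q i))))
                = ∑ j, ((a * (b * b) * p i + -(2 * (a * a * b)) * q i + -(a * a * a) * p i) * (q j ^ 2)
                  + (-(b * b * b) * p i + 3 * (a * (b * b)) * q i + 3 * (a * a * b) * p i
                      + -(a * a * a) * q i) * (p j * q j)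
                  + (-(b * b * b) * q i + -(2 * (a * (b * b))) * p i + a * a * b * q i) * (p j ^ 2)
                  + (a * a * (b * b) + a * a * (a * a)) * (q j * V i j)
                  + (-(a * (b * b * b)) + -(a * a * (a * b))) * (p j * V i j)
                  + (-(a * (b * b * b)) + -(a * a * (a * b))) * (q j * U i j)
                  + (b * b * (b * b) + a * a * (b * b)) * (p j * U i j)) :=
                  Finset.sum_congr rfl fun j _ => by ring
              _ = _ := by simp only [Finset.sum_add_distrib, ← Finset.mul_sum]
        _ = ∑ i, ((b * b * (b * b) * (∑ j, p j * q j) + -(a * (b * b * b)) * (∑ j, q j ^ 2)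
              + 2 * (a * (b * b * b)) * (∑ j, p j ^ 2) + -(3 * (a * a * (b * b))) * (∑ j, p j * q j)
              + a * a * (a * b) * (∑ j, q j ^ 2)) * (p i ^ 2)
            + (b * b * (b * b) * (∑ j, p j ^ 2) + -(4 * (a * (b * b * b))) * (∑ j, p j * q j)
              + 3 * (a * a * (b * b)) * (∑ j, q j ^ 2) + -(3 * (a * a * (b * b))) * (∑ j, p j ^ 2)
              + 4 * (a * a * (a * b)) * (∑ j, p j * q j)
              + -(a * a * (a * a)) * (∑ j, q j ^ 2)) * (p i * q i)
            + (-(a * (b * b * b)) * (∑ j, p j ^ 2) + 3 * (a * a * (b * b)) * (∑ j, p j * q j)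
              + -(2 * (a * a * (a * b))) * (∑ j, q j ^ 2) + a * a * (a * b) * (∑ j, p j ^ 2)
              + -(a * a * (a * a)) * (∑ j, p j * q j)) * (q i ^ 2)
            + (-(b * (b * b * (b * b))) + -(2 * (a * a * (b * (b * b))))
              + -(a * a * (a * (a * b)))) * (p i * (∑ j, q j * V i j))
            + (a * (b * (b * (b * b))) + 2 * (a * a * (a * (b * b)))
              + a * a * (a * (a * a))) * (q i * (∑ j, q j * V i j))) := by
            refine Finset.sum_congr rfl fun i _ => ?_
            rw [h6 i, h5' i]
            ring
        _ = (b * b * (b * b) * (∑ j, p j * q j) + -(a * (b * b * b)) * (∑ j, q j ^ 2)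
              + 2 * (a * (b * b * b)) * (∑ j, p j ^ 2) + -(3 * (a * a * (b * b))) * (∑ j, p j * q j)
              + a * a * (a * b) * (∑ j, q j ^ 2)) * (∑ i, p i ^ 2)
            + (b * b * (b * b) * (∑ j, p j ^ 2) + -(4 * (a * (b * b * b))) * (∑ j, p j * q j)
              + 3 * (a * a * (b * b)) * (∑ j, q j ^ 2) + -(3 * (a * a * (b * b))) * (∑ j, p j ^ 2)
              + 4 * (a * a * (a * b)) * (∑ j, p j * q j)
              + -(a * a * (a * a)) * (∑ j, q j ^ 2)) * (∑ i, p i * q i)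
            + (-(a * (b * b * b)) * (∑ j, p j ^ 2) + 3 * (a * a * (b * b)) * (∑ j, p j * q j)
              + -(2 * (a * a * (a * b))) * (∑ j, q j ^ 2) + a * a * (a * b) * (∑ j, p j ^ 2)
              + -(a * a * (a * a)) * (∑ j, p j * q j)) * (∑ i, q i ^ 2)
            + (-(b * (b * b * (b * b))) + -(2 * (a * a * (b * (b * b))))
              + -(a * a * (a * (a * b)))) * (∑ i, p i * (∑ j, q j * V i j))
            + (a * (b * (b * (b * b))) + 2 * (a * a * (a * (b * b)))
              + a * a * (a * (a * a))) * (∑ i, q i * (∑ j, q j * V i j)) := by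
            simp only [Finset.sum_add_distrib, ← Finset.mul_sum]
        _ = 0 := by
            have eJU : (∑ i, p i * (∑ j, q j * V i j)) = ∑ i, ∑ j, p i * p j * U i j :=
              Finset.sum_congr rfl fun i _ => by
                rw [← h6 i, Finset.mul_sum]
                exact Finset.sum_congr rfl fun j _ => by ring
            have eJV : (∑ i, q i * (∑ j, q j * V i j)) = ∑ i, ∑ j, q i * q j * V i j :=
              Finset.sum_congr rfl fun i _ => by
                rw [Finset.mul_sum]
                exact Finset.sum_congr rfl fun j _ => by ring
            rw [eJU, eJV, h3, h4]
            linear_combination (-((a * a + b * b) * (a * a + b * b))) * h2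
    calc
      (∑ i, ∑ j, (a * q i - b * p i) / (a * a + b * b) *
          ((a * q j - b * p j) / (a * a + b * b)) *
          (((p i * q j + a * V i j - (q i * p j + b * U i j)) * (a * a + b * b)
          - (a * q j - b * p j) * (2 * (a * p i) + 2 * (b * q i)))
          / ((a * a + b * b) * (a * a + b * b))))
        = ∑ i, ∑ j, ((a * q i - b * p i) * ((a * q j - b * p j) *
            ((p i * q j + a * V i j - (q i * p j + b * U i j)) * (a * a + b * b)
            - (a * q j - b * p j) * (2 * (a * p i) + 2 * (b * q i)))))
          / ((a * a + b * b) * (a * a + b * b) * ((a * a + b * b) * (a * a + b * b))) :=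
          Finset.sum_congr rfl fun i _ => Finset.sum_congr rfl fun j _ => by
            field_simp
      _ = (∑ i, (a * q i - b * p i) * (∑ j, (a * q j - b * p j) *
            ((p i * q j + a * V i j - (q i * p j + b * U i j)) * (a * a + b * b)
            - (a * q j - b * p j) * (2 * (a * p i) + 2 * (b * q i)))))
          / ((a * a + b * b) * (a * a + b * b) * ((a * a + b * b) * (a * a + b * b))) := by
          simp only [← Finset.sum_div, ← Finset.mul_sum]
      _ = 0 := by rw [key, zero_div]


/-- If `u, v` are orthogonal twin-harmonics on an open `Ω ⊆ ℝ^N` with `u ≠ 0` on `Ω`,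
then `f(x) = arctan(v(x)/u(x))` is perfectly harmonic on `Ω`. -/
theorem arctan_ratio_perfectly_harmonic {N : ℕ}
    (Ω : Set (Fin N → ℝ)) (hΩ : IsOpen Ω)
    (u v : (Fin N → ℝ) → ℝ)
    (huv : TwinHarmonics u v Ω) (hu : ∀ x ∈ Ω, u x ≠ 0) :
    PerfectlyHarmonic (fun x => Real.arctan (v x / u x)) Ω := by
  obtain ⟨hu2, hv2, hpt0⟩ := huv
  have hpt : ∀ x ∈ Ω, (∑ i, pd u i x * pd v i x) = 0 ∧ (∑ i, pd u i x ^ 2) = (∑ i, pd v i x ^ 2) :=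
    fun x hx => ⟨(hpt0 x hx).2.2.2, (hpt0 x hx).2.2.1⟩
  constructor
  · exact Real.contDiff_arctan.comp_contDiffOn (hv2.div hu2 hu)
  -- differentiability of u, v
  have hud : ∀ y ∈ Ω, DifferentiableAt ℝ u y := fun y hy =>
    ((hu2.differentiableOn (by norm_num)) y hy).differentiableAt (hΩ.mem_nhds hy)
  have hvd : ∀ y ∈ Ω, DifferentiableAt ℝ v y := fun y hy =>
    ((hv2.differentiableOn (by norm_num)) y hy).differentiableAt (hΩ.mem_nhds hy)
  -- differentiability of the partial derivatives
  have hpdu : ∀ (j : Fin N), ∀ y ∈ Ω, DifferentiableAt ℝ (pd u j) y := by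
    intro j y hy
    have h1 : ContDiffOn ℝ 1 (fun z => fderiv ℝ u z (Pi.single j 1)) Ω :=
      (hu2.fderiv_of_isOpen hΩ (by norm_num)).clm_apply contDiffOn_const
    exact ((h1.differentiableOn one_ne_zero) y hy).differentiableAt (hΩ.mem_nhds hy)
  have hpdv : ∀ (j : Fin N), ∀ y ∈ Ω, DifferentiableAt ℝ (pd v j) y := by
    intro j y hy
    have h1 : ContDiffOn ℝ 1 (fun z => fderiv ℝ v z (Pi.single j 1)) Ω :=
      (hv2.fderiv_of_isOpen hΩ (by norm_num)).clm_apply contDiffOn_const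
    exact ((h1.differentiableOn one_ne_zero) y hy).differentiableAt (hΩ.mem_nhds hy)
  -- first derivative formula
  have key1 : ∀ y ∈ Ω, ∀ (j : Fin N), pd (fun z => Real.arctan (v z / u z)) j y =
      (u y * pd v j y - v y * pd u j y) / (u y * u y + v y * v y) := by
    intro y hy j
    have h0 : u y ≠ 0 := hu y hy
    have hinv : HasFDerivAt (fun z => (u z)⁻¹) ((-((u y) ^ 2)⁻¹) • fderiv ℝ u y) y :=
      (hasDerivAt_inv h0).comp_hasFDerivAt y (hud y hy).hasFDerivAt
    have hq : HasFDerivAt (fun z => v z / u z)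
        (v y • ((-((u y) ^ 2)⁻¹) • fderiv ℝ u y) + (u y)⁻¹ • fderiv ℝ v y) y := by
      have h := (hvd y hy).hasFDerivAt.fun_mul hinv
      simpa only [div_eq_mul_inv] using h
    have hfa := hq.arctan
    simp only [pd]
    rw [hfa.fderiv]
    simp only [ContinuousLinearMap.smul_apply, ContinuousLinearMap.add_apply, smul_eq_mul]
    have hww : u y * u y + v y * v y ≠ 0 := by nlinarith [mul_self_nonneg (v y), mul_self_pos.mpr h0]
    have h1p : 1 + (v y / u y) ^ 2 ≠ 0 := by positivity
    field_simp
    ring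
  -- now fix x
  intro x hx
  have h0 : u x ≠ 0 := hu x hx
  have hW0 : u x * u x + v x * v x ≠ 0 := by nlinarith [mul_self_nonneg (v x), mul_self_pos.mpr h0]
  -- second derivative formula
  have key2 : ∀ (i j : Fin N), pd (pd (fun z => Real.arctan (v z / u z)) j) i x =
      ((pd u i x * pd v j x + u x * pd (pd v j) i x
          - (pd v i x * pd u j x + v x * pd (pd u j) i x)) * (u x * u x + v x * v x)
        - (u x * pd v j x - v x * pd u j x)
          * (2 * (u x * pd u i x) + 2 * (v x * pd v i x)))
        / ((u x * u x + v x * v x) * (u x * u x + v x * v x)) := by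
    intro i j
    have hev : pd (fun z => Real.arctan (v z / u z)) j =ᶠ[nhds x]
        (fun y => (u y * pd v j y - v y * pd u j y) * (u y * u y + v y * v y)⁻¹) := by
      filter_upwards [hΩ.mem_nhds hx] with y hy
      rw [key1 y hy j, div_eq_mul_inv]
    have hNum : HasFDerivAt (fun y => u y * pd v j y - v y * pd u j y)
        ((u x • fderiv ℝ (pd v j) x + pd v j x • fderiv ℝ u x)
          - (v x • fderiv ℝ (pd u j) x + pd u j x • fderiv ℝ v x)) x :=
      ((hud x hx).hasFDerivAt.mul (hpdv j x hx).hasFDerivAt).sub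
        ((hvd x hx).hasFDerivAt.mul (hpdu j x hx).hasFDerivAt)
    have hWf : HasFDerivAt (fun y => u y * u y + v y * v y)
        ((u x • fderiv ℝ u x + u x • fderiv ℝ u x)
          + (v x • fderiv ℝ v x + v x • fderiv ℝ v x)) x :=
      ((hud x hx).hasFDerivAt.mul (hud x hx).hasFDerivAt).add
        ((hvd x hx).hasFDerivAt.mul (hvd x hx).hasFDerivAt)
    have hWinv : HasFDerivAt (fun y => (u y * u y + v y * v y)⁻¹)
        ((-((u x * u x + v x * v x) ^ 2)⁻¹) •
          ((u x • fderiv ℝ u x + u x • fderiv ℝ u x)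
            + (v x • fderiv ℝ v x + v x • fderiv ℝ v x))) x :=
      (hasDerivAt_inv hW0).comp_hasFDerivAt x hWf
    have hG := hNum.fun_mul hWinv
    conv_lhs => rw [pd, hev.fderiv_eq, hG.fderiv]
    simp only [pd, ContinuousLinearMap.smul_apply, ContinuousLinearMap.add_apply,
      ContinuousLinearMap.sub_apply, smul_eq_mul]
    field_simp
    ring
  -- constraint derivative identities
  have hcross : ∀ (i : Fin N),
      (∑ j, (pd u j x * pd (pd v j) i x + pd v j x * pd (pd u j) i x)) = 0 := by
    intro i
    have hsum : HasFDerivAt (fun y => ∑ j, pd u j y * pd v j y)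
        (∑ j, (pd u j x • fderiv ℝ (pd v j) x + pd v j x • fderiv ℝ (pd u j) x)) x :=
      HasFDerivAt.fun_sum fun j _ => (hpdu j x hx).hasFDerivAt.mul (hpdv j x hx).hasFDerivAt
    have hzero : fderiv ℝ (fun y => ∑ j, pd u j y * pd v j y) x = 0 := by
      have hev : (fun y => ∑ j, pd u j y * pd v j y) =ᶠ[nhds x] (fun _ => (0 : ℝ)) := by
        filter_upwards [hΩ.mem_nhds hx] with y hy
        exact (hpt y hy).1
      rw [hev.fderiv_eq]
      exact fderiv_const_apply 0
    have heq := hsum.fderiv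
    rw [hzero] at heq
    have happ := congrArg (fun (L : (Fin N → ℝ) →L[ℝ] ℝ) => L (Pi.single i 1)) heq
    simp only [ContinuousLinearMap.zero_apply, ContinuousLinearMap.sum_apply,
      ContinuousLinearMap.add_apply, ContinuousLinearMap.smul_apply, smul_eq_mul] at happ
    simp only [← pd.eq_def] at happ
    linarith [happ]
  have hdiag : ∀ (i : Fin N),
      (∑ j, pd u j x * pd (pd u j) i x) = (∑ j, pd v j x * pd (pd v j) i x) := by
    intro i
    have hsum : HasFDerivAt (fun y => ∑ j, (pd u j y * pd u j y - pd v j y * pd v j y))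
        (∑ j, ((pd u j x • fderiv ℝ (pd u j) x + pd u j x • fderiv ℝ (pd u j) x)
          - (pd v j x • fderiv ℝ (pd v j) x + pd v j x • fderiv ℝ (pd v j) x))) x :=
      HasFDerivAt.fun_sum fun j _ =>
        ((hpdu j x hx).hasFDerivAt.mul (hpdu j x hx).hasFDerivAt).sub
          ((hpdv j x hx).hasFDerivAt.mul (hpdv j x hx).hasFDerivAt)
    have hzero : fderiv ℝ (fun y => ∑ j, (pd u j y * pd u j y - pd v j y * pd v j y)) x = 0 := by
      have hev : (fun y => ∑ j, (pd u j y * pd u j y - pd v j y * pd v j y)) =ᶠ[nhds x]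
          (fun _ => (0 : ℝ)) := by
        filter_upwards [hΩ.mem_nhds hx] with y hy
        have h3 := (hpt y hy).2
        simp only [pow_two] at h3
        rw [Finset.sum_sub_distrib, h3, sub_self]
      rw [hev.fderiv_eq]
      exact fderiv_const_apply 0
    have heq := hsum.fderiv
    rw [hzero] at heq
    have happ := congrArg (fun (L : (Fin N → ℝ) →L[ℝ] ℝ) => L (Pi.single i 1)) heq
    simp only [ContinuousLinearMap.zero_apply, ContinuousLinearMap.sum_apply,
      ContinuousLinearMap.add_apply, ContinuousLinearMap.sub_apply,
      ContinuousLinearMap.smul_apply, smul_eq_mul] at happ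
    simp only [← pd.eq_def] at happ
    rw [Finset.sum_sub_distrib, Finset.sum_add_distrib, Finset.sum_add_distrib] at happ
    linarith [happ]
  have halg := twin_alg (u x) (v x) hW0 (fun i => pd u i x) (fun i => pd v i x)
    (fun i j => pd (pd u j) i x) (fun i j => pd (pd v j) i x)
    ((hpt0 x hx).1) ((hpt0 x hx).2.1) ((hpt0 x hx).2.2.1) ((hpt0 x hx).2.2.2) hcross hdiag
  constructor
  · exact (Finset.sum_congr rfl fun i _ => key2 i i).trans halg.1
  · exact (Finset.sum_congr rfl fun i _ => Finset.sum_congr rfl fun j _ => by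
      rw [key1 x hx i, key1 x hx j, key2 i j]).trans halg.2


end
end

section
/- Let u and v be orthogonal twin-harmonics on an open set Ω ⊆ ℝ^N with u(x) > 0 for all x ∈ Ω, let h(x) = u(x) + i·v(x), and let k ∈ ℝ. Define U(x) = Re(h(x)^k) and V(x) = Im(h(x)^k), where h^k = exp(k·log h) is the principal branch complex power (well defined since Re h = u > 0). Then U and V are orthogonal twin-harmonics on Ω. -/
noncomputable section

open Complex Finset
local notation "conj'" => starRingEnd ℂ

section Helpers

lemma rrr (a b c : ℂ) : 4*(a.re*b.re*c.re)
    = (a*b*c).re + (a*b*conj' c).re + (a*conj' b*c).re + (conj' a*b*c).re := by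
  simp [Complex.mul_re, Complex.mul_im]; ring

lemma iii (a b c : ℂ) : 4*(a.im*b.im*c.im)
    = -(a*b*c).im + (a*b*conj' c).im + (a*conj' b*c).im + (conj' a*b*c).im := by
  simp [Complex.mul_re, Complex.mul_im]; ring

lemma exp_lemma {N : ℕ} (w : Fin N → ℂ) (τ : Fin N → Fin N → ℂ)
    (hS : ∑ i, ∑ j, w i * w j * τ i j = 0)
    (hM1 : ∑ i, ∑ j, conj' (w i) * w j * τ i j = 0)
    (hM2 : ∑ i, ∑ j, w i * conj' (w j) * τ i j = 0) :
    (4*∑ i, ∑ j, (w i).re*(w j).re*(τ i j).re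
       = (∑ i, ∑ j, w i * w j * conj' (τ i j)).re) ∧
    (4*∑ i, ∑ j, (w i).im*(w j).im*(τ i j).im
       = (∑ i, ∑ j, w i * w j * conj' (τ i j)).im) := by
  constructor
  · have h : 4*∑ i, ∑ j, (w i).re*(w j).re*(τ i j).re
        = (∑ i, ∑ j, w i * w j * τ i j).re + (∑ i, ∑ j, w i * w j * conj' (τ i j)).re
          + (∑ i, ∑ j, w i * conj' (w j) * τ i j).re
          + (∑ i, ∑ j, conj' (w i) * w j * τ i j).re := by
      simp only [Complex.re_sum, Finset.mul_sum, ← Finset.sum_add_distrib]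
      exact Finset.sum_congr rfl fun i _ =>

        Finset.sum_congr rfl fun j _ => rrr _ _ _
    rw [hS, hM1, hM2] at h; simpa using h
  · have h : 4*∑ i, ∑ j, (w i).im*(w j).im*(τ i j).im
        = -(∑ i, ∑ j, w i * w j * τ i j).im + (∑ i, ∑ j, w i * w j * conj' (τ i j)).im
          + (∑ i, ∑ j, w i * conj' (w j) * τ i j).im
          + (∑ i, ∑ j, conj' (w i) * w j * τ i j).im := by
      simp only [Complex.im_sum, Finset.mul_sum, ← Finset.sum_neg_distrib, ← Finset.sum_add_distrib]
      exact Finset.sum_congr rfl fun i _ =>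

        Finset.sum_congr rfl fun j _ => iii _ _ _
    rw [hS, hM1, hM2] at h; simpa using h
lemma conj_mul_im (H w : ℂ) : (conj' H * w).im = H.re * w.im - H.im * w.re := by
  rw [Complex.mul_im, Complex.conj_re, Complex.conj_im]; ring

lemma mul_ofReal_im (w : ℂ) (r : ℝ) : (w * (r:ℂ)).im = w.im * r := by
  simp [Complex.mul_im]

lemma ofReal_mul_im' (r : ℝ) (w : ℂ) : ((r:ℂ) * w).im = r * w.im := by
  simp [Complex.mul_im]

lemma sq_re' (w : ℂ) : (w^2).re = w.re^2 - w.im^2 := by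
  rw [pow_two, Complex.mul_re]; ring

lemma sq_im' (w : ℂ) : (w^2).im = 2*(w.re*w.im) := by
  rw [pow_two, Complex.mul_im]; ring

section
variable {N : ℕ} (z H A B : ℂ) (lam : ℝ) (P : Fin N → ℂ) (Qm : Fin N → Fin N → ℂ)

lemma core
    (hHA : conj' H * A = (lam : ℂ) * conj' z)
    (hHB : (conj' H * A^2 * conj' B).im = 0)
    (h1 : ∑ i, P i ^ 2 = 0)
    (h2 : ∀ j, ∑ i, P i * Qm j i = 0)
    (hsym : ∀ i j, Qm i j = Qm j i)
    (h3 : (conj' z * ∑ i, Qm i i).im = 0)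
    (h4 : z.im * (∑ i, ∑ j, (P i).re * (P j).re * (Qm i j).re)
        = z.re * (∑ i, ∑ j, (P i).im * (P j).im * (Qm i j).im)) :
    (H.im * (∑ i, (B*P i*P i + A*Qm i i).re) = H.re * (∑ i, (B*P i*P i + A*Qm i i).im)) ∧
    (H.im * (∑ i, ∑ j, (A*P i).re*(A*P j).re*(B*P i*P j + A*Qm i j).re)
      = H.re * (∑ i, ∑ j, (A*P i).im*(A*P j).im*(B*P i*P j + A*Qm i j).im)) ∧
    (∑ i, (A*P i).re^2 = ∑ i, (A*P i).im^2) ∧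
    (∑ i, (A*P i).re * (A*P i).im = 0) := by
  -- first order facts
  have hW2 : ∑ i, (A*P i)^2 = 0 := by
    have : ∑ i, (A*P i)^2 = A^2 * ∑ i, P i^2 := by
      rw [Finset.mul_sum]; exact Finset.sum_congr rfl fun i _ => by ring
    rw [this, h1, mul_zero]
  have hg3 : ∑ i, (A*P i).re^2 = ∑ i, (A*P i).im^2 := by
    have h := congrArg Complex.re hW2
    rw [Complex.re_sum] at h
    have h' : ∑ i, ((A*P i).re^2 - (A*P i).im^2) = 0 := by
      have e : ∑ i, ((A*P i).re^2 - (A*P i).im^2) = ∑ i, ((A*P i)^2).re :=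
        Finset.sum_congr rfl fun i _ => (sq_re' _).symm
      rw [e, h, Complex.zero_re]
    rw [Finset.sum_sub_distrib] at h'
    linarith
  have hg4 : ∑ i, (A*P i).re * (A*P i).im = 0 := by
    have h := congrArg Complex.im hW2
    rw [Complex.im_sum] at h
    have h' : ∑ i, (2*((A*P i).re * (A*P i).im)) = 0 := by
      have e : ∑ i, (2*((A*P i).re * (A*P i).im)) = ∑ i, ((A*P i)^2).im :=
        Finset.sum_congr rfl fun i _ => (sq_im' _).symm
      rw [e, h, Complex.zero_im]
    rw [← Finset.mul_sum] at h'
    linarith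
  -- second order zero sums at P level
  have hq1 : ∑ i, ∑ j, P i * P j * Qm i j = 0 := by
    refine Finset.sum_eq_zero fun i _ => ?_
    have : ∑ j, P i * P j * Qm i j = P i * ∑ j, P j * Qm i j := by
      rw [Finset.mul_sum]; exact Finset.sum_congr rfl fun j _ => by ring
    rw [this, h2 i, mul_zero]
  have hq2 : ∑ i, ∑ j, conj' (P i) * P j * Qm i j = 0 := by
    refine Finset.sum_eq_zero fun i _ => ?_
    have : ∑ j, conj' (P i) * P j * Qm i j = conj' (P i) * ∑ j, P j * Qm i j := by
      rw [Finset.mul_sum]; exact Finset.sum_congr rfl fun j _ => by ring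
    rw [this, h2 i, mul_zero]
  have hq3 : ∑ i, ∑ j, P i * conj' (P j) * Qm i j = 0 := by
    rw [Finset.sum_comm]
    refine Finset.sum_eq_zero fun j _ => ?_
    have : ∑ i, P i * conj' (P j) * Qm i j = conj' (P j) * ∑ i, P i * Qm j i := by
      rw [Finset.mul_sum]
      exact Finset.sum_congr rfl fun i _ => by rw [hsym i j]; ring
    rw [this, h2 j, mul_zero]
  -- second order zero sums at W level
  have hf1 : ∑ i, ∑ j, (A*P i) * (A*P j) * (B*P i*P j + A*Qm i j) = 0 := by
    refine Finset.sum_eq_zero fun i _ => ?_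
    have : ∑ j, (A*P i) * (A*P j) * (B*P i*P j + A*Qm i j)
        = A^2*B*P i^2 * (∑ j, P j^2) + A^3*P i * (∑ j, P j * Qm i j) := by
      rw [Finset.mul_sum, Finset.mul_sum, ← Finset.sum_add_distrib]
      exact Finset.sum_congr rfl fun j _ => by ring
    rw [this, h1, h2 i, mul_zero, mul_zero, add_zero]
  have hf2 : ∑ i, ∑ j, conj' (A*P i) * (A*P j) * (B*P i*P j + A*Qm i j) = 0 := by
    refine Finset.sum_eq_zero fun i _ => ?_
    have : ∑ j, conj' (A*P i) * (A*P j) * (B*P i*P j + A*Qm i j)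
        = conj' A*A*B*(conj' (P i)*P i) * (∑ j, P j^2)
          + conj' A*A^2*conj' (P i) * (∑ j, P j * Qm i j) := by
      rw [Finset.mul_sum, Finset.mul_sum, ← Finset.sum_add_distrib]
      exact Finset.sum_congr rfl fun j _ => by simp only [map_mul]; ring
    rw [this, h1, h2 i, mul_zero, mul_zero, add_zero]
  have hf3 : ∑ i, ∑ j, (A*P i) * conj' (A*P j) * (B*P i*P j + A*Qm i j) = 0 := by
    rw [Finset.sum_comm]
    refine Finset.sum_eq_zero fun j _ => ?_
    have : ∑ i, (A*P i) * conj' (A*P j) * (B*P i*P j + A*Qm i j)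
        = A*conj' A*B*(conj' (P j)*P j) * (∑ i, P i^2)
          + A^2*conj' A*conj' (P j) * (∑ i, P i * Qm j i) := by
      rw [Finset.mul_sum, Finset.mul_sum, ← Finset.sum_add_distrib]
      exact Finset.sum_congr rfl fun i _ => by
        simp only [map_mul]; rw [hsym i j]; ring
    rw [this, h1, h2 j, mul_zero, mul_zero, add_zero]
  obtain ⟨hPre, hPim⟩ := exp_lemma P Qm hq1 hq2 hq3
  obtain ⟨hWre, hWim⟩ := exp_lemma (fun i => A*P i) (fun i j => B*P i*P j + A*Qm i j) hf1 hf2 hf3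
  -- evaluate S'
  have hS' : (∑ i, ∑ j, (A*P i) * (A*P j) * conj' (B*P i*P j + A*Qm i j))
      = A^2*conj' B * ((∑ i, P i * conj' (P i)) * (∑ j, P j * conj' (P j)))
        + A^2*conj' A * (∑ i, ∑ j, P i * P j * conj' (Qm i j)) := by
    rw [Finset.sum_mul_sum, Finset.mul_sum, Finset.mul_sum, ← Finset.sum_add_distrib]
    refine Finset.sum_congr rfl fun i _ => ?_
    rw [Finset.mul_sum, Finset.mul_sum, ← Finset.sum_add_distrib]
    exact Finset.sum_congr rfl fun j _ => by simp only [map_add, map_mul]; ring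
  have hns : (∑ i, P i * conj' (P i)) = ((∑ i, Complex.normSq (P i) : ℝ) : ℂ) := by
    push_cast
    exact Finset.sum_congr rfl fun i _ => (Complex.mul_conj _)
  -- g1
  have hTsum : ∑ i, (B*P i*P i + A*Qm i i) = A * ∑ i, Qm i i := by
    rw [Finset.sum_add_distrib]
    have e : ∑ i, B*P i*P i = B * ∑ i, P i^2 := by
      rw [Finset.mul_sum]; exact Finset.sum_congr rfl fun i _ => by ring
    rw [e, h1, mul_zero, zero_add, Finset.mul_sum]
  have hg1 : H.im * (∑ i, (B*P i*P i + A*Qm i i).re) = H.re * (∑ i, (B*P i*P i + A*Qm i i).im) := by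
    have key : (conj' H * (A * ∑ i, Qm i i)).im = 0 := by
      rw [← mul_assoc, hHA, mul_assoc, ofReal_mul_im', h3, mul_zero]
    rw [conj_mul_im] at key
    rw [← Complex.re_sum, ← Complex.im_sum, hTsum]
    linarith
  -- g2
  have hCim : (conj' z * (∑ i, ∑ j, P i * P j * conj' (Qm i j))).im = 0 := by
    rw [conj_mul_im, ← hPre, ← hPim]
    linarith [h4]
  have hg2 : H.im * (∑ i, ∑ j, (A*P i).re*(A*P j).re*(B*P i*P j + A*Qm i j).re)
      = H.re * (∑ i, ∑ j, (A*P i).im*(A*P j).im*(B*P i*P j + A*Qm i j).im) := by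
    have key : (conj' H * (∑ i, ∑ j, (A*P i) * (A*P j) * conj' (B*P i*P j + A*Qm i j))).im = 0 := by
      rw [hS', hns, mul_add, Complex.add_im]
      have e1 : (conj' H * (A^2*conj' B * (((∑ i, Complex.normSq (P i) : ℝ):ℂ) * ((∑ i, Complex.normSq (P i) : ℝ):ℂ)))).im = 0 := by
        have e : conj' H * (A^2*conj' B * (((∑ i, Complex.normSq (P i) : ℝ):ℂ) * ((∑ i, Complex.normSq (P i) : ℝ):ℂ)))
            = (conj' H * A^2 * conj' B) * ((((∑ i, Complex.normSq (P i)))^2 : ℝ) : ℂ) := by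
          push_cast; ring
        rw [e, mul_ofReal_im, hHB, zero_mul]
      have e2 : (conj' H * (A^2*conj' A * (∑ i, ∑ j, P i * P j * conj' (Qm i j)))).im = 0 := by
        have e : conj' H * (A^2*conj' A * (∑ i, ∑ j, P i * P j * conj' (Qm i j)))
            = ((lam:ℂ) * ((Complex.normSq A : ℝ):ℂ)) * (conj' z * (∑ i, ∑ j, P i * P j * conj' (Qm i j))) := by
          rw [← Complex.mul_conj]
          linear_combination (A * conj' A * (∑ i, ∑ j, P i * P j * conj' (Qm i j))) * hHA
        rw [e, ← Complex.ofReal_mul, ofReal_mul_im', hCim, mul_zero]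
      rw [e1, e2, add_zero]
    rw [conj_mul_im] at key
    linear_combination (-(1:ℝ)/4)*key + (H.im/4)*hWre - (H.re/4)*hWim
  exact ⟨hg1, hg2, hg3, hg4⟩

end

lemma conj_mul_self (w : ℂ) : conj' w * w = ((Complex.normSq w : ℝ) : ℂ) := by
  rw [mul_comm]; exact Complex.mul_conj w

section PD
variable {N : ℕ} {Ω : Set (Fin N → ℝ)} {f : (Fin N → ℝ) → ℝ} {x : Fin N → ℝ}
variable {N : ℕ} {Ω : Set (Fin N → ℝ)} {f : (Fin N → ℝ) → ℝ} {x : Fin N → ℝ}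

lemma pd_congr_nhds {g : (Fin N → ℝ) → ℝ} (h : f =ᶠ[nhds x] g) (i : Fin N) :
    pd f i x = pd g i x := by
  unfold pd; rw [h.fderiv_eq]

lemma diff_fderiv (hΩ : IsOpen Ω) (hf : ContDiffOn ℝ 2 f Ω) (hx : x ∈ Ω) :
    DifferentiableAt ℝ (fderiv ℝ f) x := by
  have h1 : ContDiffOn ℝ 1 (fderiv ℝ f) Ω := hf.fderiv_of_isOpen hΩ le_rfl
  exact (h1.differentiableOn one_ne_zero).differentiableAt (hΩ.mem_nhds hx)

lemma hasFDerivAt_pd (hΩ : IsOpen Ω) (hf : ContDiffOn ℝ 2 f Ω) (hx : x ∈ Ω) (j : Fin N) :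
    HasFDerivAt (pd f j)
      ((ContinuousLinearMap.apply ℝ ℝ (Pi.single j 1 : Fin N → ℝ)).comp
        (fderiv ℝ (fderiv ℝ f) x)) x :=
  (ContinuousLinearMap.apply ℝ ℝ (Pi.single j 1 : Fin N → ℝ)).hasFDerivAt.comp x
    (diff_fderiv hΩ hf hx).hasFDerivAt

lemma diff_pd (hΩ : IsOpen Ω) (hf : ContDiffOn ℝ 2 f Ω) (hx : x ∈ Ω) (j : Fin N) :
    DifferentiableAt ℝ (pd f j) x :=
  (hasFDerivAt_pd hΩ hf hx j).differentiableAt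

lemma pd_pd_eq (hΩ : IsOpen Ω) (hf : ContDiffOn ℝ 2 f Ω) (hx : x ∈ Ω) (i j : Fin N) :
    pd (pd f j) i x = fderiv ℝ (fderiv ℝ f) x (Pi.single i 1) (Pi.single j 1) := by
  have h := (hasFDerivAt_pd hΩ hf hx j).fderiv
  show fderiv ℝ (pd f j) x (Pi.single i 1) = _
  rw [h]; rfl

lemma pd_symm (hΩ : IsOpen Ω) (hf : ContDiffOn ℝ 2 f Ω) (hx : x ∈ Ω) (i j : Fin N) :
    pd (pd f j) i x = pd (pd f i) j x := by
  rw [pd_pd_eq hΩ hf hx i j, pd_pd_eq hΩ hf hx j i]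
  exact (hf.contDiffAt (hΩ.mem_nhds hx)).isSymmSndFDerivAt (by norm_num) _ _

end PD
section Chain
variable {N : ℕ} {Ω : Set (Fin N → ℝ)} {u v : (Fin N → ℝ) → ℝ} {y : Fin N → ℝ}
variable {N : ℕ} {Ω : Set (Fin N → ℝ)} {u v : (Fin N → ℝ) → ℝ} {y : Fin N → ℝ}

lemma pd_re_im {F : (Fin N → ℝ) → ℂ} {D : (Fin N → ℝ) →L[ℝ] ℂ} (hF : HasFDerivAt F D y)
    (i : Fin N) :
    pd (fun w => (F w).re) i y = (D (Pi.single i 1)).re ∧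
    pd (fun w => (F w).im) i y = (D (Pi.single i 1)).im := by
  have hre : HasFDerivAt (fun w => (F w).re) (Complex.reCLM.comp D) y :=
    Complex.reCLM.hasFDerivAt.comp y hF
  have him : HasFDerivAt (fun w => (F w).im) (Complex.imCLM.comp D) y :=
    Complex.imCLM.hasFDerivAt.comp y hF
  constructor
  · show fderiv ℝ (fun w => (F w).re) y (Pi.single i 1) = _
    rw [hre.fderiv]; rfl
  · show fderiv ℝ (fun w => (F w).im) y (Pi.single i 1) = _
    rw [him.fderiv]; rfl

lemma hasFDerivAt_ofReal_comp {f : (Fin N → ℝ) → ℝ} {f' : (Fin N → ℝ) →L[ℝ] ℝ}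
    (hf : HasFDerivAt f f' y) :
    HasFDerivAt (fun w => (f w : ℂ)) (Complex.ofRealCLM.comp f') y :=
  Complex.ofRealCLM.hasFDerivAt.comp y hf

lemma hasFDerivAt_pair {f g : (Fin N → ℝ) → ℝ} {f' g' : (Fin N → ℝ) →L[ℝ] ℝ}
    (hf : HasFDerivAt f f' y) (hg : HasFDerivAt g g' y) :
    HasFDerivAt (fun w => (f w : ℂ) + (g w : ℂ) * Complex.I)
      (Complex.ofRealCLM.comp f' + Complex.I • (Complex.ofRealCLM.comp g')) y :=
  (hasFDerivAt_ofReal_comp hf).add ((hasFDerivAt_ofReal_comp hg).mul_const Complex.I)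

lemma hasFDerivAt_pow_comp {f g : (Fin N → ℝ) → ℝ} {f' g' : (Fin N → ℝ) →L[ℝ] ℝ}
    (hf : HasFDerivAt f f' y) (hg : HasFDerivAt g g' y) (hpos : 0 < f y) (c : ℂ) :
    HasFDerivAt (fun w => ((f w : ℂ) + (g w : ℂ) * Complex.I) ^ c)
      ((c * ((f y : ℂ) + (g y : ℂ) * Complex.I) ^ (c-1)) •
        (Complex.ofRealCLM.comp f' + Complex.I • (Complex.ofRealCLM.comp g'))) y := by
  have hz : ((f y : ℂ) + (g y : ℂ) * Complex.I) ∈ Complex.slitPlane := by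
    rw [Complex.mem_slitPlane_iff]; left; simpa using hpos
  have hc := (Complex.hasStrictDerivAt_cpow_const (c := c) hz).hasDerivAt
  have hcomp := (hc.hasFDerivAt.restrictScalars ℝ).comp y (hasFDerivAt_pair hf hg)
  have heq : ∀ (a : ℂ) (D : (Fin N → ℝ) →L[ℝ] ℂ),
      ((ContinuousLinearMap.toSpanSingleton ℂ a).restrictScalars ℝ).comp D = a • D := by
    intro a D; ext w; simp [mul_comm]
  rw [heq] at hcomp
  exact hcomp

end Chain
open Complex Finset in
lemma contDiffOn_repow {N : ℕ} {Ω : Set (Fin N → ℝ)} {u v : (Fin N → ℝ) → ℝ}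
    (hΩ : IsOpen Ω) (hu2 : ContDiffOn ℝ 2 u Ω) (hv2 : ContDiffOn ℝ 2 v Ω)
    (hu : ∀ x ∈ Ω, 0 < u x) (k : ℝ) (L : ℂ →L[ℝ] ℝ) :
    ContDiffOn ℝ 2 (fun x => L (((u x : ℂ) + (v x : ℂ) * Complex.I) ^ (k : ℂ))) Ω := by
  intro y hy
  have hh : ContDiffWithinAt ℝ 2 (fun w => (u w : ℂ) + (v w : ℂ) * Complex.I) Ω y := by
    have h1 : ContDiffOn ℝ 2 (fun w => ((u w : ℂ))) Ω := Complex.ofRealCLM.contDiff.comp_contDiffOn hu2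
    have h2 : ContDiffOn ℝ 2 (fun w => ((v w : ℂ))) Ω := Complex.ofRealCLM.contDiff.comp_contDiffOn hv2
    exact (h1.add (h2.mul contDiffOn_const)) y hy
  have hz : ((u y : ℂ) + (v y : ℂ) * Complex.I) ∈ Complex.slitPlane := by
    rw [Complex.mem_slitPlane_iff]; left; simpa using hu y hy
  have han : AnalyticAt ℂ (fun w : ℂ => w ^ (k:ℂ)) ((u y : ℂ) + (v y : ℂ) * Complex.I) :=
    analyticAt_id.cpow analyticAt_const hz
  have hg : ContDiffAt ℝ 2 (fun w : ℂ => w ^ (k:ℂ)) ((u y : ℂ) + (v y : ℂ) * Complex.I) :=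
    (han.contDiffAt).restrict_scalars ℝ
  have hcomp : ContDiffWithinAt ℝ 2
      (fun w => (((u w : ℂ) + (v w : ℂ) * Complex.I) ^ (k : ℂ))) Ω y :=
    by have := hg.comp_contDiffWithinAt y hh; exact this
  exact (L.contDiff.of_le le_top).comp_contDiffWithinAt hcomp

end Helpers

section MainProof
open Complex Finset

/-- If `(u, v)` are orthogonal twin-harmonics on an open `Ω ⊆ ℝ^N` with `u > 0`,
`h = u + i·v` and `k ∈ ℝ`, then `(Re (h^k), Im (h^k))` are orthogonal twin-harmonics on `Ω`,
where `h^k` is the principal-branch complex power. -/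
theorem twinHarmonics_cpow {N : ℕ}
    (Ω : Set (Fin N → ℝ)) (hΩ : IsOpen Ω)
    (u v : (Fin N → ℝ) → ℝ)
    (huv : TwinHarmonics u v Ω) (hu : ∀ x ∈ Ω, 0 < u x) (k : ℝ) :
    TwinHarmonics
      (fun x => (((u x : ℂ) + (v x : ℂ) * Complex.I) ^ (k : ℂ)).re)
      (fun x => (((u x : ℂ) + (v x : ℂ) * Complex.I) ^ (k : ℂ)).im) Ω := by
  obtain ⟨hu2, hv2, hptw⟩ := huv
  have hud : ∀ y ∈ Ω, HasFDerivAt u (fderiv ℝ u y) y := fun y hy =>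
    ((hu2.differentiableOn two_ne_zero).differentiableAt (hΩ.mem_nhds hy)).hasFDerivAt
  have hvd : ∀ y ∈ Ω, HasFDerivAt v (fderiv ℝ v y) y := fun y hy =>
    ((hv2.differentiableOn two_ne_zero).differentiableAt (hΩ.mem_nhds hy)).hasFDerivAt
  -- applied-value helper
  have happ : ∀ (a : ℂ) (L1 L2 : (Fin N → ℝ) →L[ℝ] ℝ) (w : Fin N → ℝ),
      ((a • (Complex.ofRealCLM.comp L1 + Complex.I • (Complex.ofRealCLM.comp L2))) :
        (Fin N → ℝ) →L[ℝ] ℂ) w = a * ((L1 w : ℂ) + (L2 w : ℂ) * Complex.I) := by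
    intro a L1 L2 w
    simp [ContinuousLinearMap.smul_apply, ContinuousLinearMap.add_apply,
      ContinuousLinearMap.comp_apply, smul_eq_mul]
    ring
  -- first derivative formulas on Ω
  have hUpd : ∀ y ∈ Ω, ∀ i, pd (fun w => (((u w : ℂ) + (v w : ℂ) * Complex.I) ^ (k : ℂ)).re) i y
      = ((k:ℂ) * ((u y:ℂ) + (v y:ℂ) * Complex.I) ^ ((k:ℂ)-1)
          * ((pd u i y : ℂ) + (pd v i y : ℂ) * Complex.I)).re := by
    intro y hy i
    have hF := hasFDerivAt_pow_comp (hud y hy) (hvd y hy) (hu y hy) (k:ℂ)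
    rw [(pd_re_im hF i).1, happ]; rfl
  have hVpd : ∀ y ∈ Ω, ∀ i, pd (fun w => (((u w : ℂ) + (v w : ℂ) * Complex.I) ^ (k : ℂ)).im) i y
      = ((k:ℂ) * ((u y:ℂ) + (v y:ℂ) * Complex.I) ^ ((k:ℂ)-1)
          * ((pd u i y : ℂ) + (pd v i y : ℂ) * Complex.I)).im := by
    intro y hy i
    have hF := hasFDerivAt_pow_comp (hud y hy) (hvd y hy) (hu y hy) (k:ℂ)
    rw [(pd_re_im hF i).2, happ]; rfl
  refine ⟨?_, ?_, ?_⟩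
  · exact contDiffOn_repow hΩ hu2 hv2 hu k Complex.reCLM
  · exact contDiffOn_repow hΩ hu2 hv2 hu k Complex.imCLM
  intro x hx
  obtain ⟨hp1, hp2, hp3, hp4⟩ := hptw x hx
  have hux : 0 < u x := hu x hx
  -- second derivative formulas at x, for both re and im simultaneously
  have hsecond : ∀ i j,
      pd (pd (fun w => (((u w : ℂ) + (v w : ℂ) * Complex.I) ^ (k : ℂ)).re) j) i x
        = (((k:ℂ)*(((k:ℂ)-1) * ((u x:ℂ) + (v x:ℂ)*Complex.I) ^ ((k:ℂ)-1-1)))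
            * ((pd u i x : ℂ) + (pd v i x:ℂ)*Complex.I) * ((pd u j x : ℂ) + (pd v j x:ℂ)*Complex.I)
           + ((k:ℂ) * ((u x:ℂ) + (v x:ℂ)*Complex.I) ^ ((k:ℂ)-1))
            * ((pd (pd u j) i x : ℂ) + (pd (pd v j) i x : ℂ) * Complex.I)).re ∧
      pd (pd (fun w => (((u w : ℂ) + (v w : ℂ) * Complex.I) ^ (k : ℂ)).im) j) i x
        = (((k:ℂ)*(((k:ℂ)-1) * ((u x:ℂ) + (v x:ℂ)*Complex.I) ^ ((k:ℂ)-1-1)))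
            * ((pd u i x : ℂ) + (pd v i x:ℂ)*Complex.I) * ((pd u j x : ℂ) + (pd v j x:ℂ)*Complex.I)
           + ((k:ℂ) * ((u x:ℂ) + (v x:ℂ)*Complex.I) ^ ((k:ℂ)-1))
            * ((pd (pd u j) i x : ℂ) + (pd (pd v j) i x : ℂ) * Complex.I)).im := by
    intro i j
    have hevU : pd (fun w => (((u w : ℂ) + (v w : ℂ) * Complex.I) ^ (k : ℂ)).re) j
        =ᶠ[nhds x] (fun y => ((k:ℂ) * ((u y:ℂ) + (v y:ℂ) * Complex.I) ^ ((k:ℂ)-1)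
          * ((pd u j y : ℂ) + (pd v j y : ℂ) * Complex.I)).re) := by
      filter_upwards [hΩ.mem_nhds hx] with y hy
      exact hUpd y hy j
    have hevV : pd (fun w => (((u w : ℂ) + (v w : ℂ) * Complex.I) ^ (k : ℂ)).im) j
        =ᶠ[nhds x] (fun y => ((k:ℂ) * ((u y:ℂ) + (v y:ℂ) * Complex.I) ^ ((k:ℂ)-1)
          * ((pd u j y : ℂ) + (pd v j y : ℂ) * Complex.I)).im) := by
      filter_upwards [hΩ.mem_nhds hx] with y hy
      exact hVpd y hy j
    -- derivative of the inner complex-valued function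
    have hpow := hasFDerivAt_pow_comp (hud x hx) (hvd x hx) hux ((k:ℂ)-1)
    have hkA := hpow.const_mul (k:ℂ)
    have hPj := hasFDerivAt_pair (diff_pd hΩ hu2 hx j).hasFDerivAt
      (diff_pd hΩ hv2 hx j).hasFDerivAt
    have hphi := hkA.mul hPj
    have hval : ((((k:ℂ) * (((u x:ℂ) + (v x:ℂ)*Complex.I) ^ ((k:ℂ)-1))) •
          (Complex.ofRealCLM.comp (fderiv ℝ (pd u j) x)
            + Complex.I • (Complex.ofRealCLM.comp (fderiv ℝ (pd v j) x)))
        + ((pd u j x : ℂ) + (pd v j x : ℂ) * Complex.I) •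
          ((k:ℂ) • (((((k:ℂ)-1) * ((u x:ℂ) + (v x:ℂ)*Complex.I) ^ ((k:ℂ)-1-1))) •
            (Complex.ofRealCLM.comp (fderiv ℝ u x)
              + Complex.I • (Complex.ofRealCLM.comp (fderiv ℝ v x)))))) (Pi.single i 1))
        = (((k:ℂ)*(((k:ℂ)-1) * ((u x:ℂ) + (v x:ℂ)*Complex.I) ^ ((k:ℂ)-1-1)))
            * ((pd u i x : ℂ) + (pd v i x:ℂ)*Complex.I) * ((pd u j x : ℂ) + (pd v j x:ℂ)*Complex.I)
           + ((k:ℂ) * ((u x:ℂ) + (v x:ℂ)*Complex.I) ^ ((k:ℂ)-1))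
            * ((pd (pd u j) i x : ℂ) + (pd (pd v j) i x : ℂ) * Complex.I)) := by
      rw [ContinuousLinearMap.add_apply, happ, ContinuousLinearMap.smul_apply,
        ContinuousLinearMap.smul_apply, happ]
      show _ * ((((fderiv ℝ (pd u j) x) (Pi.single i 1) : ℝ) : ℂ) + _) + _ = _
      rw [show ((fderiv ℝ (pd u j) x) (Pi.single i 1)) = pd (pd u j) i x from rfl,
        show ((fderiv ℝ (pd v j) x) (Pi.single i 1)) = pd (pd v j) i x from rfl,
        show ((fderiv ℝ u x) (Pi.single i 1)) = pd u i x from rfl,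
        show ((fderiv ℝ v x) (Pi.single i 1)) = pd v i x from rfl]
      simp only [smul_eq_mul]
      ring
    constructor
    · rw [pd_congr_nhds hevU i, (pd_re_im (F := fun y => (k:ℂ) * ((u y:ℂ) + (v y:ℂ) * Complex.I) ^ ((k:ℂ)-1) * ((pd u j y : ℂ) + (pd v j y : ℂ) * Complex.I)) hphi i).1, hval]
    · rw [pd_congr_nhds hevV i, (pd_re_im (F := fun y => (k:ℂ) * ((u y:ℂ) + (v y:ℂ) * Complex.I) ^ ((k:ℂ)-1) * ((pd u j y : ℂ) + (pd v j y : ℂ) * Complex.I)) hphi i).2, hval]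
  -- basic facts about z
  have hz0 : ((u x:ℂ) + (v x:ℂ)*Complex.I) ≠ 0 := by
    intro h
    have := congrArg Complex.re h
    simp at this
    linarith
  have hkey1 : ((u x:ℂ) + (v x:ℂ)*Complex.I)^((k:ℂ)-1) * ((u x:ℂ) + (v x:ℂ)*Complex.I)
      = ((u x:ℂ) + (v x:ℂ)*Complex.I)^(k:ℂ) := by
    calc ((u x:ℂ) + (v x:ℂ)*Complex.I)^((k:ℂ)-1) * ((u x:ℂ) + (v x:ℂ)*Complex.I)
        = ((u x:ℂ) + (v x:ℂ)*Complex.I)^((k:ℂ)-1) * ((u x:ℂ) + (v x:ℂ)*Complex.I)^(1:ℂ) := by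
          rw [Complex.cpow_one]
      _ = ((u x:ℂ) + (v x:ℂ)*Complex.I)^((k:ℂ)-1+1) := (Complex.cpow_add _ _ hz0).symm
      _ = ((u x:ℂ) + (v x:ℂ)*Complex.I)^(k:ℂ) := by norm_num
  have hkey2 : ((u x:ℂ) + (v x:ℂ)*Complex.I)^((k:ℂ)-1-1) * ((u x:ℂ) + (v x:ℂ)*Complex.I)
      = ((u x:ℂ) + (v x:ℂ)*Complex.I)^((k:ℂ)-1) := by
    calc ((u x:ℂ) + (v x:ℂ)*Complex.I)^((k:ℂ)-1-1) * ((u x:ℂ) + (v x:ℂ)*Complex.I)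
        = ((u x:ℂ) + (v x:ℂ)*Complex.I)^((k:ℂ)-1-1) * ((u x:ℂ) + (v x:ℂ)*Complex.I)^(1:ℂ) := by
          rw [Complex.cpow_one]
      _ = ((u x:ℂ) + (v x:ℂ)*Complex.I)^((k:ℂ)-1-1+1) := (Complex.cpow_add _ _ hz0).symm
      _ = ((u x:ℂ) + (v x:ℂ)*Complex.I)^((k:ℂ)-1) := by norm_num
  have hnsz : Complex.normSq ((u x:ℂ) + (v x:ℂ)*Complex.I) ≠ 0 :=
    ne_of_gt (Complex.normSq_pos.mpr hz0)
  have hHA : conj' (((u x:ℂ) + (v x:ℂ)*Complex.I)^(k:ℂ))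
        * ((k:ℂ) * ((u x:ℂ) + (v x:ℂ)*Complex.I)^((k:ℂ)-1))
      = ((k * Complex.normSq (((u x:ℂ) + (v x:ℂ)*Complex.I)^(k:ℂ))
          / Complex.normSq ((u x:ℂ) + (v x:ℂ)*Complex.I) : ℝ) : ℂ)
        * conj' ((u x:ℂ) + (v x:ℂ)*Complex.I) := by
    apply mul_right_cancel₀ hz0
    have hcc : conj' ((u x:ℂ) + (v x:ℂ)*Complex.I) * ((u x:ℂ) + (v x:ℂ)*Complex.I)
        = ((Complex.normSq ((u x:ℂ) + (v x:ℂ)*Complex.I) : ℝ) : ℂ) := conj_mul_self _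
    have hHH : conj' (((u x:ℂ) + (v x:ℂ)*Complex.I)^(k:ℂ)) * (((u x:ℂ) + (v x:ℂ)*Complex.I)^(k:ℂ))
        = ((Complex.normSq (((u x:ℂ) + (v x:ℂ)*Complex.I)^(k:ℂ)) : ℝ) : ℂ) := conj_mul_self _
    calc conj' (((u x:ℂ) + (v x:ℂ)*Complex.I)^(k:ℂ))
          * ((k:ℂ) * ((u x:ℂ) + (v x:ℂ)*Complex.I)^((k:ℂ)-1)) * ((u x:ℂ) + (v x:ℂ)*Complex.I)
        = (k:ℂ) * (conj' (((u x:ℂ) + (v x:ℂ)*Complex.I)^(k:ℂ))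
            * (((u x:ℂ) + (v x:ℂ)*Complex.I)^((k:ℂ)-1) * ((u x:ℂ) + (v x:ℂ)*Complex.I))) := by ring
      _ = (k:ℂ) * ((Complex.normSq (((u x:ℂ) + (v x:ℂ)*Complex.I)^(k:ℂ)) : ℝ) : ℂ) := by
          rw [hkey1, hHH]
      _ = ((k * Complex.normSq (((u x:ℂ) + (v x:ℂ)*Complex.I)^(k:ℂ))
            / Complex.normSq ((u x:ℂ) + (v x:ℂ)*Complex.I) : ℝ) : ℂ)
          * ((Complex.normSq ((u x:ℂ) + (v x:ℂ)*Complex.I) : ℝ) : ℂ) := by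
          rw [← Complex.ofReal_mul, ← Complex.ofReal_mul]
          congr 1
          field_simp
      _ = _ := by rw [← hcc]; ring
  have hcz : conj' ((u x:ℂ) + (v x:ℂ)*Complex.I) ≠ 0 := by
    intro h
    apply hz0
    have := congrArg conj' h
    simpa using this
  have hHB : (conj' (((u x:ℂ) + (v x:ℂ)*Complex.I)^(k:ℂ))
        * ((k:ℂ) * ((u x:ℂ) + (v x:ℂ)*Complex.I)^((k:ℂ)-1))^2
        * conj' ((k:ℂ) * (((k:ℂ)-1) * ((u x:ℂ) + (v x:ℂ)*Complex.I)^((k:ℂ)-1-1)))).im = 0 := by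
    have hBz : ((k:ℂ) * (((k:ℂ)-1) * ((u x:ℂ) + (v x:ℂ)*Complex.I)^((k:ℂ)-1-1)))
          * ((u x:ℂ) + (v x:ℂ)*Complex.I)
        = (k:ℂ) * (((k:ℂ)-1) * ((u x:ℂ) + (v x:ℂ)*Complex.I)^((k:ℂ)-1)) := by
      calc ((k:ℂ) * (((k:ℂ)-1) * ((u x:ℂ) + (v x:ℂ)*Complex.I)^((k:ℂ)-1-1)))
            * ((u x:ℂ) + (v x:ℂ)*Complex.I)
          = (k:ℂ) * (((k:ℂ)-1) * (((u x:ℂ) + (v x:ℂ)*Complex.I)^((k:ℂ)-1-1)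
              * ((u x:ℂ) + (v x:ℂ)*Complex.I))) := by ring
        _ = _ := by rw [hkey2]
    have hmc := Complex.mul_conj (((u x:ℂ) + (v x:ℂ)*Complex.I)^((k:ℂ)-1))
    have hmain : conj' (((u x:ℂ) + (v x:ℂ)*Complex.I)^(k:ℂ))
          * ((k:ℂ) * ((u x:ℂ) + (v x:ℂ)*Complex.I)^((k:ℂ)-1))^2
          * conj' ((k:ℂ) * (((k:ℂ)-1) * ((u x:ℂ) + (v x:ℂ)*Complex.I)^((k:ℂ)-1-1)))
        = (((k * Complex.normSq (((u x:ℂ) + (v x:ℂ)*Complex.I)^(k:ℂ))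
            / Complex.normSq ((u x:ℂ) + (v x:ℂ)*Complex.I))
            * (k^2*((k-1)* Complex.normSq (((u x:ℂ) + (v x:ℂ)*Complex.I)^((k:ℂ)-1)))) : ℝ) : ℂ) := by
      apply mul_right_cancel₀ hcz
      calc conj' (((u x:ℂ) + (v x:ℂ)*Complex.I)^(k:ℂ))
            * ((k:ℂ) * ((u x:ℂ) + (v x:ℂ)*Complex.I)^((k:ℂ)-1))^2
            * conj' ((k:ℂ) * (((k:ℂ)-1) * ((u x:ℂ) + (v x:ℂ)*Complex.I)^((k:ℂ)-1-1)))
            * conj' ((u x:ℂ) + (v x:ℂ)*Complex.I)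
          = (conj' (((u x:ℂ) + (v x:ℂ)*Complex.I)^(k:ℂ))
              * ((k:ℂ) * ((u x:ℂ) + (v x:ℂ)*Complex.I)^((k:ℂ)-1)))
            * ((k:ℂ) * ((u x:ℂ) + (v x:ℂ)*Complex.I)^((k:ℂ)-1))
            * conj' (((k:ℂ) * (((k:ℂ)-1) * ((u x:ℂ) + (v x:ℂ)*Complex.I)^((k:ℂ)-1-1)))
                * ((u x:ℂ) + (v x:ℂ)*Complex.I)) := by
            simp only [map_mul]; ring
        _ = (((k * Complex.normSq (((u x:ℂ) + (v x:ℂ)*Complex.I)^(k:ℂ))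
              / Complex.normSq ((u x:ℂ) + (v x:ℂ)*Complex.I) : ℝ) : ℂ)
              * conj' ((u x:ℂ) + (v x:ℂ)*Complex.I))
            * ((k:ℂ) * ((u x:ℂ) + (v x:ℂ)*Complex.I)^((k:ℂ)-1))
            * conj' ((k:ℂ) * (((k:ℂ)-1) * ((u x:ℂ) + (v x:ℂ)*Complex.I)^((k:ℂ)-1))) := by
            rw [hHA, hBz]
        _ = _ := by
            simp only [map_mul, map_sub, map_one, Complex.conj_ofReal]
            push_cast
            linear_combination ((k:ℂ) * ((Complex.normSq (((u x:ℂ) + (v x:ℂ)*Complex.I)^(k:ℂ)) : ℝ) : ℂ)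
              / ((Complex.normSq ((u x:ℂ) + (v x:ℂ)*Complex.I) : ℝ) : ℂ)
              * (k:ℂ)^2*((k:ℂ)-1) * conj' ((u x:ℂ) + (v x:ℂ)*Complex.I)) * hmc
    rw [hmain, Complex.ofReal_im]
  -- h1
  have h1 : (∑ i, ((pd u i x:ℂ) + (pd v i x:ℂ)*Complex.I)^2) = 0 := by
    rw [Complex.ext_iff]
    constructor
    · rw [Complex.re_sum, Complex.zero_re]
      calc ∑ i, ((((pd u i x:ℂ) + (pd v i x:ℂ)*Complex.I))^2).re
          = ∑ i, (pd u i x^2 - pd v i x^2) :=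
            Finset.sum_congr rfl fun i _ => by rw [sq_re']; simp
        _ = 0 := by rw [Finset.sum_sub_distrib, hp3, sub_self]
    · rw [Complex.im_sum, Complex.zero_im]
      calc ∑ i, ((((pd u i x:ℂ) + (pd v i x:ℂ)*Complex.I))^2).im
          = ∑ i, (2*(pd u i x * pd v i x)) :=
            Finset.sum_congr rfl fun i _ => by rw [sq_im']; simp
        _ = 0 := by rw [← Finset.mul_sum, hp4, mul_zero]
  -- h2
  have h2 : ∀ j, ∑ i, (((pd u i x:ℂ) + (pd v i x:ℂ)*Complex.I)
      * ((pd (pd u i) j x:ℂ) + (pd (pd v i) j x:ℂ)*Complex.I)) = 0 := by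
    intro j
    have hdU : ∀ i : Fin N, HasFDerivAt (pd u i) (fderiv ℝ (pd u i) x) x :=
      fun i => (diff_pd hΩ hu2 hx i).hasFDerivAt
    have hdV : ∀ i : Fin N, HasFDerivAt (pd v i) (fderiv ℝ (pd v i) x) x :=
      fun i => (diff_pd hΩ hv2 hx i).hasFDerivAt
    have hc1 : HasFDerivAt (fun y => ∑ i, (pd u i y * pd u i y - pd v i y * pd v i y))
        (∑ i, ((pd u i x • fderiv ℝ (pd u i) x + pd u i x • fderiv ℝ (pd u i) x)
          - (pd v i x • fderiv ℝ (pd v i) x + pd v i x • fderiv ℝ (pd v i) x))) x :=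
      HasFDerivAt.fun_sum fun i _ => ((hdU i).mul (hdU i)).sub ((hdV i).mul (hdV i))
    have hc2 : HasFDerivAt (fun y => ∑ i, (pd u i y * pd v i y))
        (∑ i, (pd u i x • fderiv ℝ (pd v i) x + pd v i x • fderiv ℝ (pd u i) x)) x :=
      HasFDerivAt.fun_sum fun i _ => (hdU i).mul (hdV i)
    have hz1 : (fun y => ∑ i, (pd u i y * pd u i y - pd v i y * pd v i y))
        =ᶠ[nhds x] (fun _ => (0:ℝ)) := by
      filter_upwards [hΩ.mem_nhds hx] with y hy
      have h3' := (hptw y hy).2.2.1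
      calc ∑ i, (pd u i y * pd u i y - pd v i y * pd v i y)
          = ∑ i, (pd u i y^2) - ∑ i, (pd v i y^2) := by
            rw [← Finset.sum_sub_distrib]
            exact Finset.sum_congr rfl fun i _ => by ring
        _ = 0 := by rw [h3', sub_self]
    have hz2 : (fun y => ∑ i, (pd u i y * pd v i y)) =ᶠ[nhds x] (fun _ => (0:ℝ)) := by
      filter_upwards [hΩ.mem_nhds hx] with y hy
      exact (hptw y hy).2.2.2
    have hd1 : (∑ i, ((pd u i x • fderiv ℝ (pd u i) x + pd u i x • fderiv ℝ (pd u i) x)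
        - (pd v i x • fderiv ℝ (pd v i) x + pd v i x • fderiv ℝ (pd v i) x))) = 0 := by
      rw [← hc1.fderiv, hz1.fderiv_eq]
      exact fderiv_const_apply 0
    have hd2 : (∑ i, (pd u i x • fderiv ℝ (pd v i) x + pd v i x • fderiv ℝ (pd u i) x)) = 0 := by
      rw [← hc2.fderiv, hz2.fderiv_eq]
      exact fderiv_const_apply 0
    have hval1 := congrArg (fun L : (Fin N → ℝ) →L[ℝ] ℝ => L (Pi.single j 1)) hd1
    have hval2 := congrArg (fun L : (Fin N → ℝ) →L[ℝ] ℝ => L (Pi.single j 1)) hd2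
    simp only [ContinuousLinearMap.sum_apply, ContinuousLinearMap.sub_apply,
      ContinuousLinearMap.add_apply, ContinuousLinearMap.smul_apply, smul_eq_mul,
      ContinuousLinearMap.zero_apply] at hval1 hval2
    have hval1' : ∑ i, (pd u i x * pd (pd u i) j x - pd v i x * pd (pd v i) j x) = 0 := by
      have e : ∑ i, (pd u i x * pd (pd u i) j x - pd v i x * pd (pd v i) j x)
          = (1/2) * ∑ i, (pd u i x * (fderiv ℝ (pd u i) x) (Pi.single j 1)
              + pd u i x * (fderiv ℝ (pd u i) x) (Pi.single j 1)
              - (pd v i x * (fderiv ℝ (pd v i) x) (Pi.single j 1)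
                + pd v i x * (fderiv ℝ (pd v i) x) (Pi.single j 1))) := by
        rw [Finset.mul_sum]
        refine Finset.sum_congr rfl fun i _ => ?_
        rw [show (fderiv ℝ (pd u i) x) (Pi.single j 1) = pd (pd u i) j x from rfl,
          show (fderiv ℝ (pd v i) x) (Pi.single j 1) = pd (pd v i) j x from rfl]
        ring
      rw [e, hval1, mul_zero]
    have hval2' : ∑ i, (pd u i x * pd (pd v i) j x + pd v i x * pd (pd u i) j x) = 0 := by
      have e : ∑ i, (pd u i x * pd (pd v i) j x + pd v i x * pd (pd u i) j x)
          = ∑ i, (pd u i x * (fderiv ℝ (pd v i) x) (Pi.single j 1)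
              + pd v i x * (fderiv ℝ (pd u i) x) (Pi.single j 1)) := by
        refine Finset.sum_congr rfl fun i _ => ?_
        rw [show (fderiv ℝ (pd u i) x) (Pi.single j 1) = pd (pd u i) j x from rfl,
          show (fderiv ℝ (pd v i) x) (Pi.single j 1) = pd (pd v i) j x from rfl]
      rw [e, hval2]
    rw [Complex.ext_iff]
    constructor
    · rw [Complex.re_sum, Complex.zero_re]
      calc ∑ i, ((((pd u i x:ℂ) + (pd v i x:ℂ)*Complex.I)
            * ((pd (pd u i) j x:ℂ) + (pd (pd v i) j x:ℂ)*Complex.I)).re)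
          = ∑ i, (pd u i x * pd (pd u i) j x - pd v i x * pd (pd v i) j x) :=
            Finset.sum_congr rfl fun i _ => by simp [Complex.mul_re]
        _ = 0 := hval1'
    · rw [Complex.im_sum, Complex.zero_im]
      calc ∑ i, ((((pd u i x:ℂ) + (pd v i x:ℂ)*Complex.I)
            * ((pd (pd u i) j x:ℂ) + (pd (pd v i) j x:ℂ)*Complex.I)).im)
          = ∑ i, (pd u i x * pd (pd v i) j x + pd v i x * pd (pd u i) j x) :=
            Finset.sum_congr rfl fun i _ => by simp [Complex.mul_im]
        _ = 0 := hval2'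
  -- symmetry
  have hsym : ∀ i j, ((pd (pd u j) i x:ℂ) + (pd (pd v j) i x:ℂ)*Complex.I)
      = ((pd (pd u i) j x:ℂ) + (pd (pd v i) j x:ℂ)*Complex.I) := fun i j => by
    rw [pd_symm hΩ hu2 hx i j, pd_symm hΩ hv2 hx i j]
  -- h3
  have hQsum : (∑ i, ((pd (pd u i) i x:ℂ) + (pd (pd v i) i x:ℂ)*Complex.I))
      = ((lap u x:ℂ) + (lap v x:ℂ)*Complex.I) := by
    unfold lap
    push_cast
    rw [Finset.sum_add_distrib, Finset.sum_mul]
  have h3 : (conj' ((u x:ℂ) + (v x:ℂ)*Complex.I)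
      * ∑ i, ((pd (pd u i) i x:ℂ) + (pd (pd v i) i x:ℂ)*Complex.I)).im = 0 := by
    rw [hQsum, conj_mul_im]
    simp
    ring_nf
    linarith [hp1]
  -- h4
  have ere : ∀ (a b : ℝ), ((a:ℂ) + (b:ℂ)*Complex.I).re = a := by intro a b; simp
  have eim : ∀ (a b : ℝ), ((a:ℂ) + (b:ℂ)*Complex.I).im = b := by intro a b; simp
  have h4 : ((u x:ℂ) + (v x:ℂ)*Complex.I).im
      * (∑ i, ∑ j, ((pd u i x:ℂ) + (pd v i x:ℂ)*Complex.I).re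
          * ((pd u j x:ℂ) + (pd v j x:ℂ)*Complex.I).re
          * ((pd (pd u j) i x:ℂ) + (pd (pd v j) i x:ℂ)*Complex.I).re)
      = ((u x:ℂ) + (v x:ℂ)*Complex.I).re
      * (∑ i, ∑ j, ((pd u i x:ℂ) + (pd v i x:ℂ)*Complex.I).im
          * ((pd u j x:ℂ) + (pd v j x:ℂ)*Complex.I).im
          * ((pd (pd u j) i x:ℂ) + (pd (pd v j) i x:ℂ)*Complex.I).im) := by
    have e1 : (∑ i, ∑ j, ((pd u i x:ℂ) + (pd v i x:ℂ)*Complex.I).re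
          * ((pd u j x:ℂ) + (pd v j x:ℂ)*Complex.I).re
          * ((pd (pd u j) i x:ℂ) + (pd (pd v j) i x:ℂ)*Complex.I).re) = infLap u x := by
      unfold infLap
      exact Finset.sum_congr rfl fun i _ => Finset.sum_congr rfl fun j _ => by
        rw [ere, ere, ere]
    have e2 : (∑ i, ∑ j, ((pd u i x:ℂ) + (pd v i x:ℂ)*Complex.I).im
          * ((pd u j x:ℂ) + (pd v j x:ℂ)*Complex.I).im
          * ((pd (pd u j) i x:ℂ) + (pd (pd v j) i x:ℂ)*Complex.I).im) = infLap v x := by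
      unfold infLap
      exact Finset.sum_congr rfl fun i _ => Finset.sum_congr rfl fun j _ => by
        rw [eim, eim, eim]
    rw [e1, e2, ere, eim]
    exact hp2
  -- apply the algebraic core
  obtain ⟨g1, g2, g3, g4⟩ := core
    ((u x:ℂ) + (v x:ℂ)*Complex.I)
    (((u x:ℂ) + (v x:ℂ)*Complex.I)^(k:ℂ))
    ((k:ℂ) * ((u x:ℂ) + (v x:ℂ)*Complex.I)^((k:ℂ)-1))
    ((k:ℂ) * (((k:ℂ)-1) * ((u x:ℂ) + (v x:ℂ)*Complex.I)^((k:ℂ)-1-1)))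
    (k * Complex.normSq (((u x:ℂ) + (v x:ℂ)*Complex.I)^(k:ℂ))
      / Complex.normSq ((u x:ℂ) + (v x:ℂ)*Complex.I))
    (fun i => (pd u i x:ℂ) + (pd v i x:ℂ)*Complex.I)
    (fun i j => (pd (pd u j) i x:ℂ) + (pd (pd v j) i x:ℂ)*Complex.I)
    hHA hHB h1 h2 hsym h3 h4
  beta_reduce at g1 g2 g3 g4
  have hsec1 : ∀ i j, pd (pd (fun w => (((u w : ℂ) + (v w : ℂ) * Complex.I) ^ (k : ℂ)).re) j) i x
      = (((k:ℂ)*(((k:ℂ)-1) * ((u x:ℂ) + (v x:ℂ)*Complex.I) ^ ((k:ℂ)-1-1)))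
          * ((pd u i x : ℂ) + (pd v i x:ℂ)*Complex.I) * ((pd u j x : ℂ) + (pd v j x:ℂ)*Complex.I)
         + ((k:ℂ) * ((u x:ℂ) + (v x:ℂ)*Complex.I) ^ ((k:ℂ)-1))
          * ((pd (pd u j) i x : ℂ) + (pd (pd v j) i x : ℂ) * Complex.I)).re :=
    fun i j => (hsecond i j).1
  have hsec2 : ∀ i j, pd (pd (fun w => (((u w : ℂ) + (v w : ℂ) * Complex.I) ^ (k : ℂ)).im) j) i x
      = (((k:ℂ)*(((k:ℂ)-1) * ((u x:ℂ) + (v x:ℂ)*Complex.I) ^ ((k:ℂ)-1-1)))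
          * ((pd u i x : ℂ) + (pd v i x:ℂ)*Complex.I) * ((pd u j x : ℂ) + (pd v j x:ℂ)*Complex.I)
         + ((k:ℂ) * ((u x:ℂ) + (v x:ℂ)*Complex.I) ^ ((k:ℂ)-1))
          * ((pd (pd u j) i x : ℂ) + (pd (pd v j) i x : ℂ) * Complex.I)).im :=
    fun i j => (hsecond i j).2
  have hU1 := hUpd x hx
  have hV1 := hVpd x hx
  refine ⟨?_, ?_, ?_, ?_⟩
  · unfold lap
    simp only [hsec1, hsec2]
    exact g1
  · unfold infLap
    simp only [hsec1, hsec2, hU1, hV1]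
    exact g2
  · simp only [hU1, hV1]
    exact g3
  · simp only [hU1, hV1]
    exact g4

end MainProof


end
end

section
/- Let h be a holomorphic function on an open set Ω ⊆ ℂ^m belonging to the class 𝒯^m. Identify ℂ^m with ℝ^{2m} via z_k = x_k + i·y_k and set u(x,y) = Re h(z) and v(x,y) = Im h(z). Then u and v are orthogonal twin-harmonics on the corresponding open subset of ℝ^{2m}: at every point, v·Δu = u·Δv, v·Δ_∞u = u·Δ_∞v, |∇u|² = |∇v|², and ∇u·∇v = 0. -/
noncomputable section

/-- The complex partial derivative `h_{zᵢ}` of a function on `ℂ^m`. -/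
noncomputable def cpd {m : ℕ} (h : (Fin m → ℂ) → ℂ) (i : Fin m) (z : Fin m → ℂ) : ℂ :=
  fderiv ℂ h z (Pi.single i 1)

/-- The identification `ℝ^(m+m) ≅ ℂ^m`, `(x, y) ↦ x + i·y` componentwise. -/
noncomputable def emb {m : ℕ} (w : Fin (m + m) → ℝ) : Fin m → ℂ :=
  fun k => (w (Fin.castAdd m k) : ℂ) + (w (Fin.natAdd m k) : ℂ) * Complex.I


section TwinAuxSec
open Complex Metric Filter Topology
namespace TwinAux


variable {m : ℕ}

def embL (m : ℕ) : (Fin (m + m) → ℝ) →L[ℝ] (Fin m → ℂ) :=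
  ContinuousLinearMap.pi fun k =>
    Complex.ofRealCLM.comp (ContinuousLinearMap.proj (Fin.castAdd m k)) +
      (Complex.I • Complex.ofRealCLM).comp (ContinuousLinearMap.proj (Fin.natAdd m k))

lemma emb_eq : (emb : (Fin (m + m) → ℝ) → (Fin m → ℂ)) = ⇑(embL m) := by
  funext w k
  simp [embL, emb]
  ring

lemma embL_single_cast (k : Fin m) :
    embL m (Pi.single (Fin.castAdd m k) 1) = Pi.single k 1 := by
  funext j
  simp only [embL, ContinuousLinearMap.pi_apply, ContinuousLinearMap.add_apply,
    ContinuousLinearMap.comp_apply, ContinuousLinearMap.proj_apply,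
    ContinuousLinearMap.smul_apply, Complex.ofRealCLM_apply, Pi.single_apply,
    Fin.ext_iff, Fin.coe_castAdd, Fin.coe_natAdd]
  have h1 : ¬ ((m + (j : ℕ) : ℕ) = (k : ℕ)) := by omega
  rw [if_neg h1]
  split_ifs <;> simp

lemma embL_single_nat (k : Fin m) :
    embL m (Pi.single (Fin.natAdd m k) 1) = Pi.single k Complex.I := by
  funext j
  simp only [embL, ContinuousLinearMap.pi_apply, ContinuousLinearMap.add_apply,
    ContinuousLinearMap.comp_apply, ContinuousLinearMap.proj_apply,
    ContinuousLinearMap.smul_apply, Complex.ofRealCLM_apply, Pi.single_apply,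
    Fin.ext_iff, Fin.coe_castAdd, Fin.coe_natAdd]
  have h1 : ¬ (((j : ℕ) : ℕ) = m + (k : ℕ)) := by omega
  rw [if_neg h1]
  by_cases hj : (j : ℕ) = (k : ℕ)
  · rw [if_pos (by omega), if_pos hj]; simp
  · rw [if_neg (by omega), if_neg hj]; simp

lemma fderiv_single_I {g : (Fin m → ℂ) → ℂ} {z : Fin m → ℂ} (k : Fin m) :
    fderiv ℂ g z (Pi.single k Complex.I) = Complex.I * cpd g k z := by
  have h : (Pi.single k Complex.I : Fin m → ℂ) = Complex.I • (Pi.single k 1 : Fin m → ℂ) := by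
    funext j
    rcases eq_or_ne j k with rfl | hj
    · simp
    · simp [Pi.single_apply, hj]
  rw [h, map_smul]
  rfl

lemma pd_comp (T : ℂ →L[ℝ] ℝ) (g : (Fin m → ℂ) → ℂ) (w : Fin (m + m) → ℝ)
    (hg : DifferentiableAt ℂ g (emb w)) (i : Fin (m + m)) :
    pd (fun x => T (g (emb x))) i w
      = T ((fderiv ℂ g (emb w)) (embL m (Pi.single i 1))) := by
  have h1 : HasFDerivAt (emb : (Fin (m + m) → ℝ) → (Fin m → ℂ)) (embL m) w := by
    rw [emb_eq]; exact (embL m).hasFDerivAt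
  have h2 : HasFDerivAt g ((fderiv ℂ g (emb w)).restrictScalars ℝ) (emb w) :=
    hg.hasFDerivAt.restrictScalars ℝ
  have h3 : HasFDerivAt (fun x => T (g (emb x)))
      ((T.comp ((fderiv ℂ g (emb w)).restrictScalars ℝ)).comp (embL m)) w :=
    T.hasFDerivAt.comp w (h2.comp w h1)
  rw [pd, h3.fderiv]
  rfl

lemma pd_congr_nhds {N : ℕ} {f g : (Fin N → ℝ) → ℝ} {x : Fin N → ℝ}
    (hfg : f =ᶠ[nhds x] g) (i : Fin N) : pd f i x = pd g i x := by
  unfold pd; rw [hfg.fderiv_eq]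

lemma pd_neg {N : ℕ} (f : (Fin N → ℝ) → ℝ) (i : Fin N) (x : Fin N → ℝ) :
    pd (fun y => -(f y)) i x = -(pd f i x) := by
  unfold pd; rw [fderiv_fun_neg]; simp

lemma pd_re_cast {g : (Fin m → ℂ) → ℂ} {w : Fin (m + m) → ℝ}
    (hg : DifferentiableAt ℂ g (emb w)) (k : Fin m) :
    pd (fun x => (g (emb x)).re) (Fin.castAdd m k) w = (cpd g k (emb w)).re := by
  rw [show (fun x => (g (emb x)).re) = (fun x => Complex.reCLM (g (emb x))) from rfl,
    pd_comp Complex.reCLM g w hg, embL_single_cast]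
  rfl

lemma pd_re_nat {g : (Fin m → ℂ) → ℂ} {w : Fin (m + m) → ℝ}
    (hg : DifferentiableAt ℂ g (emb w)) (k : Fin m) :
    pd (fun x => (g (emb x)).re) (Fin.natAdd m k) w = -((cpd g k (emb w)).im) := by
  rw [show (fun x => (g (emb x)).re) = (fun x => Complex.reCLM (g (emb x))) from rfl,
    pd_comp Complex.reCLM g w hg, embL_single_nat, fderiv_single_I]
  simp [Complex.mul_re]

lemma pd_im_cast {g : (Fin m → ℂ) → ℂ} {w : Fin (m + m) → ℝ}
    (hg : DifferentiableAt ℂ g (emb w)) (k : Fin m) :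
    pd (fun x => (g (emb x)).im) (Fin.castAdd m k) w = (cpd g k (emb w)).im := by
  rw [show (fun x => (g (emb x)).im) = (fun x => Complex.imCLM (g (emb x))) from rfl,
    pd_comp Complex.imCLM g w hg, embL_single_cast]
  rfl

lemma pd_im_nat {g : (Fin m → ℂ) → ℂ} {w : Fin (m + m) → ℝ}
    (hg : DifferentiableAt ℂ g (emb w)) (k : Fin m) :
    pd (fun x => (g (emb x)).im) (Fin.natAdd m k) w = (cpd g k (emb w)).re := by
  rw [show (fun x => (g (emb x)).im) = (fun x => Complex.imCLM (g (emb x))) from rfl,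
    pd_comp Complex.imCLM g w hg, embL_single_nat, fderiv_single_I]
  simp [Complex.mul_im]




variable {E F : Type*} [NormedAddCommGroup E] [NormedSpace ℂ E]
  [NormedAddCommGroup F] [NormedSpace ℂ F]

/-- Cauchy estimate in a Banach space: bound on the full Fréchet derivative
from a bound on the function, via directional one-variable estimates. -/
lemma cauchy_deriv_bound {g : E → F} {c : E} {r r' C : ℝ} (hr' : 0 < r') (hr'r : r' < r)
    (hg : DifferentiableOn ℂ g (ball c r)) (hC : ∀ x ∈ ball c r, ‖g x‖ ≤ C) :
    ‖fderiv ℂ g c‖ ≤ C / r' := by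
  have hr : 0 < r := hr'.trans hr'r
  have hC0 : 0 ≤ C := le_trans (norm_nonneg _) (hC c (mem_ball_self hr))
  refine ContinuousLinearMap.opNorm_le_bound _ (by positivity) (fun ω => ?_)
  rcases eq_or_ne ω 0 with rfl | hω
  · simp
  have hω0 : 0 < ‖ω‖ := norm_pos_iff.mpr hω
  set φ : ℂ → F := fun l => g (c + l • ω) with hφ
  have hline : ∀ l : ℂ, ‖l‖ < r / ‖ω‖ → c + l • ω ∈ ball c r := by
    intro l hl
    rw [mem_ball, dist_eq_norm]
    have h : ‖c + l • ω - c‖ = ‖l‖ * ‖ω‖ := by rw [add_sub_cancel_left, norm_smul]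
    rw [h]
    calc ‖l‖ * ‖ω‖ < (r / ‖ω‖) * ‖ω‖ := by gcongr
      _ = r := by field_simp
  have hφdiff : ∀ l : ℂ, ‖l‖ < r / ‖ω‖ → DifferentiableAt ℂ φ l := by
    intro l hl
    have h1 : DifferentiableAt ℂ g (c + l • ω) :=
      hg.differentiableAt (isOpen_ball.mem_nhds (hline l hl))
    have h2 : DifferentiableAt ℂ (fun l : ℂ => c + l • ω) l :=
      (differentiable_id.smul_const ω).differentiableAt.const_add c
    exact h1.comp l h2
  have hr1 : (0 : ℝ) < r' / ‖ω‖ := by positivity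
  have hsub : closure (ball (0 : ℂ) (r' / ‖ω‖)) ⊆ ball (0 : ℂ) (r / ‖ω‖) := by
    refine subset_trans closure_ball_subset_closedBall (fun x hx => ?_)
    rw [mem_closedBall, dist_zero_right] at hx
    rw [mem_ball, dist_zero_right]
    calc ‖x‖ ≤ r' / ‖ω‖ := hx
      _ < r / ‖ω‖ := by gcongr
  have hdc : DiffContOnCl ℂ φ (ball (0 : ℂ) (r' / ‖ω‖)) := by
    refine DifferentiableOn.diffContOnCl ?_
    intro l hl
    exact (hφdiff l (by have := hsub hl; rwa [mem_ball, dist_zero_right] at this)).differentiableWithinAt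
  have hCs : ∀ ζ ∈ sphere (0 : ℂ) (r' / ‖ω‖), ‖φ ζ‖ ≤ C := by
    intro ζ hζ
    rw [mem_sphere, dist_zero_right] at hζ
    refine hC _ (hline ζ ?_)
    rw [hζ]; gcongr
  have hder : HasDerivAt φ (fderiv ℂ g c ω) 0 := by
    have h2 : HasDerivAt (fun l : ℂ => c + l • ω) ω 0 := by
      simpa using ((hasDerivAt_id (0 : ℂ)).smul_const ω).const_add c
    have hmem : c + (0 : ℂ) • ω ∈ ball c r := by
      simpa using (mem_ball_self hr : c ∈ ball c r)
    have h1 : DifferentiableAt ℂ g (c + (0 : ℂ) • ω) :=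
      hg.differentiableAt (isOpen_ball.mem_nhds hmem)
    have h3 := h1.hasFDerivAt.comp_hasDerivAt (0 : ℂ) h2
    rw [show c + (0 : ℂ) • ω = c by simp] at h3; exact h3
  have hfin := Complex.norm_deriv_le_of_forall_mem_sphere_norm_le hr1 hdc hCs
  rw [hder.deriv] at hfin
  calc ‖fderiv ℂ g c ω‖ ≤ C / (r' / ‖ω‖) := hfin
    _ = C / r' * ‖ω‖ := by rw [div_div_eq_mul_div]; ring

/-- Difference of two difference quotients at `0`, bounded via the Cauchy integral. -/
lemma slope_bound [CompleteSpace F] {f : ℂ → F} {ρ C : ℝ} (hρ : 0 < ρ)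
    (hd : DifferentiableOn ℂ f (closedBall 0 ρ))
    (hC : ∀ ζ ∈ sphere (0 : ℂ) ρ, ‖f ζ‖ ≤ C) {s t : ℂ}
    (hs : ‖s‖ ≤ ρ / 2) (ht : ‖t‖ ≤ ρ / 2) (hs0 : s ≠ 0) (ht0 : t ≠ 0) :
    ‖s⁻¹ • (f s - f 0) - t⁻¹ • (f t - f 0)‖ ≤ 4 * C / ρ ^ 2 * ‖s - t‖ := by
  have hρC : ((ρ : ℂ)) ∈ sphere (0 : ℂ) ρ := by
    simp [abs_of_pos hρ]
  have hC0 : 0 ≤ C := le_trans (norm_nonneg _) (hC _ hρC)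
  have hcf : ContinuousOn f (sphere (0 : ℂ) ρ) :=
    hd.continuousOn.mono sphere_subset_closedBall
  have hne : ∀ u : ℂ, ‖u‖ ≤ ρ / 2 → ∀ ζ ∈ sphere (0 : ℂ) ρ, ζ - u ≠ 0 := by
    intro u hu ζ hζ h
    rw [mem_sphere, dist_zero_right] at hζ
    rw [sub_eq_zero] at h
    rw [h] at hζ
    nlinarith [hu, hρ]
  have hneζ : ∀ ζ ∈ sphere (0 : ℂ) ρ, ζ ≠ 0 := by
    intro ζ hζ h
    rw [mem_sphere, dist_zero_right, h] at hζ
    simp at hζ; nlinarith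
  have hint : ∀ u : ℂ, ‖u‖ ≤ ρ / 2 →
      CircleIntegrable (fun ζ => (ζ - u)⁻¹ • f ζ) 0 ρ := by
    intro u hu
    refine ContinuousOn.circleIntegrable hρ.le ?_
    exact ((continuousOn_id.sub continuousOn_const).inv₀ (hne u hu)).smul hcf
  have hintK : ∀ u : ℂ, ‖u‖ ≤ ρ / 2 →
      CircleIntegrable (fun ζ => ((ζ - u)⁻¹ * ζ⁻¹) • f ζ) 0 ρ := by
    intro u hu
    refine ContinuousOn.circleIntegrable hρ.le ?_
    exact (((continuousOn_id.sub continuousOn_const).inv₀ (hne u hu)).mul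
      (continuousOn_id.inv₀ hneζ)).smul hcf
  have hmemu : ∀ u : ℂ, ‖u‖ ≤ ρ / 2 → u ∈ ball (0 : ℂ) ρ := by
    intro u hu; rw [mem_ball, dist_zero_right]; linarith
  have hrep : ∀ u : ℂ, u ≠ 0 → ‖u‖ ≤ ρ / 2 →
      (2 * Real.pi * Complex.I) • (u⁻¹ • (f u - f 0))
        = ∮ ζ in C(0, ρ), ((ζ - u)⁻¹ * ζ⁻¹) • f ζ := by
    intro u hu0 hu
    have h1 : (∮ ζ in C(0, ρ), (ζ - u)⁻¹ • f ζ) = (2 * Real.pi * Complex.I) • f u :=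
      hd.circleIntegral_sub_inv_smul (hmemu u hu)
    have h0 : (∮ ζ in C(0, ρ), (ζ - 0)⁻¹ • f ζ) = (2 * Real.pi * Complex.I) • f 0 :=
      hd.circleIntegral_sub_inv_smul (mem_ball_self hρ)
    calc (2 * Real.pi * Complex.I) • (u⁻¹ • (f u - f 0))
        = u⁻¹ • ((2 * Real.pi * Complex.I) • f u - (2 * Real.pi * Complex.I) • f 0) := by
          rw [smul_comm, smul_sub]
      _ = u⁻¹ • ((∮ ζ in C(0, ρ), (ζ - u)⁻¹ • f ζ) - ∮ ζ in C(0, ρ), (ζ - 0)⁻¹ • f ζ) := by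
          rw [h1, h0]
      _ = u⁻¹ • ∮ ζ in C(0, ρ), ((ζ - u)⁻¹ • f ζ - (ζ - 0)⁻¹ • f ζ) := by
          rw [circleIntegral.integral_sub (hint u hu) (hint 0 (by simp; positivity))]
      _ = ∮ ζ in C(0, ρ), u⁻¹ • ((ζ - u)⁻¹ • f ζ - (ζ - 0)⁻¹ • f ζ) := by
          rw [← circleIntegral.integral_smul]
      _ = ∮ ζ in C(0, ρ), ((ζ - u)⁻¹ * ζ⁻¹) • f ζ := by
          refine circleIntegral.integral_congr hρ.le (fun ζ hζ => ?_)
          have h1' := hne u hu ζ hζ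
          have h2' := hneζ ζ hζ
          rw [sub_zero, ← sub_smul, smul_smul]
          congr 1
          have hu' : u ≠ 0 := hu0
          field_simp
          ring
  have hrepdiff : (2 * Real.pi * Complex.I) • (s⁻¹ • (f s - f 0) - t⁻¹ • (f t - f 0))
      = ∮ ζ in C(0, ρ), (((ζ - s)⁻¹ - (ζ - t)⁻¹) * ζ⁻¹) • f ζ := by
    rw [smul_sub, hrep s hs0 hs, hrep t ht0 ht,
      ← circleIntegral.integral_sub (hintK s hs) (hintK t ht)]
    refine circleIntegral.integral_congr hρ.le (fun ζ hζ => ?_)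
    rw [← sub_smul, ← sub_mul]
  have h2πI : (2 * Real.pi * Complex.I : ℂ) ≠ 0 := by
    simp [Real.pi_ne_zero, Complex.I_ne_zero]
  have hXeq : s⁻¹ • (f s - f 0) - t⁻¹ • (f t - f 0)
      = (2 * Real.pi * Complex.I)⁻¹ • ∮ ζ in C(0, ρ), (((ζ - s)⁻¹ - (ζ - t)⁻¹) * ζ⁻¹) • f ζ := by
    rw [← hrepdiff, inv_smul_smul₀ h2πI]
  rw [hXeq]
  have hbound : ∀ ζ ∈ sphere (0 : ℂ) ρ,
      ‖(((ζ - s)⁻¹ - (ζ - t)⁻¹) * ζ⁻¹) • f ζ‖ ≤ 4 * C / ρ ^ 3 * ‖s - t‖ := by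
    intro ζ hζ
    have hζρ : ‖ζ‖ = ρ := by rwa [mem_sphere, dist_zero_right] at hζ
    have hζs : ρ / 2 ≤ ‖ζ - s‖ := by
      calc ρ / 2 = ρ - ρ / 2 := by ring
        _ ≤ ‖ζ‖ - ‖s‖ := by rw [hζρ]; linarith
        _ ≤ ‖ζ - s‖ := norm_sub_norm_le ζ s
    have hζt : ρ / 2 ≤ ‖ζ - t‖ := by
      calc ρ / 2 = ρ - ρ / 2 := by ring
        _ ≤ ‖ζ‖ - ‖t‖ := by rw [hζρ]; linarith
        _ ≤ ‖ζ - t‖ := norm_sub_norm_le ζ t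
    have hs' : ζ - s ≠ 0 := hne s hs ζ hζ
    have ht' : ζ - t ≠ 0 := hne t ht ζ hζ
    have hkernel : (ζ - s)⁻¹ - (ζ - t)⁻¹ = (s - t) * ((ζ - s)⁻¹ * (ζ - t)⁻¹) := by
      field_simp
      ring
    have heq : ‖(((ζ - s)⁻¹ - (ζ - t)⁻¹) * ζ⁻¹) • f ζ‖
        = ‖s - t‖ * ‖ζ - s‖⁻¹ * ‖ζ - t‖⁻¹ * ρ⁻¹ * ‖f ζ‖ := by
      rw [hkernel, norm_smul, norm_mul, norm_mul, norm_mul, norm_inv, norm_inv, norm_inv, hζρ]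
      ring
    have h1 : ‖ζ - s‖⁻¹ ≤ (ρ / 2)⁻¹ := by gcongr
    have h2 : ‖ζ - t‖⁻¹ ≤ (ρ / 2)⁻¹ := by gcongr
    calc ‖(((ζ - s)⁻¹ - (ζ - t)⁻¹) * ζ⁻¹) • f ζ‖
        = ‖s - t‖ * ‖ζ - s‖⁻¹ * ‖ζ - t‖⁻¹ * ρ⁻¹ * ‖f ζ‖ := heq
      _ ≤ ‖s - t‖ * (ρ / 2)⁻¹ * (ρ / 2)⁻¹ * ρ⁻¹ * C := by
          gcongr
          exact hC ζ hζ
      _ = 4 * C / ρ ^ 3 * ‖s - t‖ := by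
          field_simp
          ring
  calc ‖(2 * Real.pi * Complex.I)⁻¹ •
        ∮ ζ in C(0, ρ), (((ζ - s)⁻¹ - (ζ - t)⁻¹) * ζ⁻¹) • f ζ‖
      ≤ ρ * (4 * C / ρ ^ 3 * ‖s - t‖) :=
        circleIntegral.norm_two_pi_i_inv_smul_integral_le_of_norm_le_const hρ.le hbound
    _ = 4 * C / ρ ^ 2 * ‖s - t‖ := by
        field_simp


/-- If `f` is holomorphic on an open set in a finite-dimensional-ish complex space,
then each directional derivative of `f` is again holomorphic (differentiable at each point). -/
lemma key [ProperSpace E] [CompleteSpace F] {f : E → F} {s : Set E} (hs : IsOpen s)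
    (hf : DifferentiableOn ℂ f s) (v : E) {z₀ : E} (hz₀ : z₀ ∈ s) :
    DifferentiableAt ℂ (fun z => fderiv ℂ f z v) z₀ := by
  rcases eq_or_ne v 0 with rfl | hv
  · simp only [map_zero]
    exact differentiableAt_const 0
  have hv0 : 0 < ‖v‖ := norm_pos_iff.mpr hv
  -- a closed ball inside s
  obtain ⟨ε, hε, hεs⟩ := Metric.isOpen_iff.mp hs z₀ hz₀
  set R : ℝ := ε / 2 with hRdef
  have hR : 0 < R := by positivity
  have hRs : closedBall z₀ R ⊆ s :=
    subset_trans (closedBall_subset_ball (by simp [hRdef]; linarith)) hεs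
  -- bound for f on the closed ball
  obtain ⟨M, hM⟩ := (isCompact_closedBall z₀ R).exists_bound_of_continuousOn
    (hf.continuousOn.mono hRs)
  have hM0 : 0 ≤ M := le_trans (norm_nonneg _) (hM z₀ (mem_closedBall_self hR.le))
  set ρ : ℝ := R / (2 * ‖v‖) with hρdef
  have hρ : 0 < ρ := by positivity
  set δ : ℝ := R / 2 with hδdef
  have hδ : 0 < δ := by positivity
  -- membership of line points
  have hmem : ∀ p ∈ ball z₀ δ, ∀ l : ℂ, ‖l‖ ≤ ρ → p + l • v ∈ closedBall z₀ R := by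
    intro p hp l hl
    rw [mem_closedBall]
    calc dist (p + l • v) z₀ ≤ dist (p + l • v) p + dist p z₀ := dist_triangle _ _ _
      _ ≤ ρ * ‖v‖ + δ := by
          refine add_le_add ?_ (le_of_lt hp)
          rw [dist_eq_norm, add_sub_cancel_left, norm_smul]
          gcongr
      _ = R := by rw [hρdef, hδdef]; field_simp; ring
  have hmem' : ∀ p ∈ ball z₀ δ, ∀ l : ℂ, ‖l‖ ≤ ρ → p + l • v ∈ s :=
    fun p hp l hl => hRs (hmem p hp l hl)
  have hpmem : ∀ p ∈ ball z₀ δ, p ∈ s := by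
    intro p hp
    have := hmem' p hp 0 (by simpa using hρ.le)
    simpa using this
  -- the sequence of difference quotients
  set t : ℕ → ℂ := fun n => ((ρ / 2) * (1 / (n + 1)) : ℝ) with htdef
  have htpos : ∀ n : ℕ, 0 < (ρ / 2) * (1 / ((n : ℝ) + 1)) := by
    intro n; positivity
  have ht0 : ∀ n, t n ≠ 0 := by
    intro n
    simp only [htdef, ne_eq, Complex.ofReal_eq_zero]
    exact (htpos n).ne'
  have htnorm : ∀ n, ‖t n‖ = (ρ / 2) * (1 / ((n : ℝ) + 1)) := by
    intro n
    rw [htdef, Complex.norm_real, Real.norm_eq_abs, abs_of_pos (htpos n)]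
  have htle : ∀ n, ‖t n‖ ≤ ρ / 2 := by
    intro n
    rw [htnorm n]
    have h1 : 1 / ((n : ℝ) + 1) ≤ 1 := by
      rw [div_le_one (by positivity)]; linarith [Nat.cast_nonneg (α := ℝ) n]
    nlinarith
  have httend : Tendsto t atTop (𝓝[≠] (0 : ℂ)) := by
    rw [tendsto_nhdsWithin_iff]
    constructor
    · have h1 : Tendsto (fun n : ℕ => ((ρ / 2) * (1 / ((n : ℝ) + 1)))) atTop (𝓝 0) := by
        have := tendsto_one_div_add_atTop_nhds_zero_nat.const_mul (ρ / 2)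
        simpa using this
      have h2 := (Complex.continuous_ofReal.tendsto 0).comp h1
      simp only [Complex.ofReal_zero] at h2
      exact h2
    · exact Eventually.of_forall (fun n => ht0 n)
  set q : ℕ → E → F := fun n p => (t n)⁻¹ • (f (p + t n • v) - f p) with hqdef
  have hqdiff : ∀ n, ∀ p ∈ ball z₀ δ, DifferentiableAt ℂ (q n) p := by
    intro n p hp
    have h1 : DifferentiableAt ℂ f (p + t n • v) :=
      hf.differentiableAt (hs.mem_nhds (hmem' p hp (t n) ((htle n).trans (by linarith))))
    have h2 : DifferentiableAt ℂ f p :=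
      hf.differentiableAt (hs.mem_nhds (hpmem p hp))
    have h3 : DifferentiableAt ℂ (fun y : E => y + t n • v) p :=
      differentiableAt_id.add_const _
    exact ((h1.comp p h3).sub h2).const_smul _
  -- pointwise convergence to the directional derivative
  have hqlim : ∀ p ∈ ball z₀ δ, Tendsto (fun n => q n p) atTop (𝓝 (fderiv ℂ f p v)) := by
    intro p hp
    have hmem0 : p + (0 : ℂ) • v ∈ s := by simpa using hpmem p hp
    have hdp : DifferentiableAt ℂ f (p + (0 : ℂ) • v) := hf.differentiableAt (hs.mem_nhds hmem0)
    have hline : HasDerivAt (fun l : ℂ => f (p + l • v)) (fderiv ℂ f p v) 0 := by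
      have h1 : HasDerivAt (fun l : ℂ => p + l • v) v 0 := by
        simpa using ((hasDerivAt_id (0 : ℂ)).smul_const v).const_add p
      have h2 := hdp.hasFDerivAt.comp_hasDerivAt (0 : ℂ) h1
      rw [show p + (0 : ℂ) • v = p by simp] at h2; exact h2
    have hslope := hasDerivAt_iff_tendsto_slope.mp hline
    have hcomp := hslope.comp httend
    convert hcomp using 2 with n
    simp only [hqdef, Function.comp_apply, slope_def_module, sub_zero]
    simp
  -- uniform bound on differences of difference quotients
  have hslopebd : ∀ p ∈ ball z₀ δ, ∀ n k : ℕ,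
      ‖q n p - q k p‖ ≤ 4 * M / ρ ^ 2 * ‖t n - t k‖ := by
    intro p hp n k
    set φ : ℂ → F := fun l => f (p + l • v) with hφdef
    have hφd : DifferentiableOn ℂ φ (closedBall 0 ρ) := by
      intro l hl
      rw [mem_closedBall, dist_zero_right] at hl
      have h1 : DifferentiableAt ℂ f (p + l • v) :=
        hf.differentiableAt (hs.mem_nhds (hmem' p hp l hl))
      have h2 : DifferentiableAt ℂ (fun l : ℂ => p + l • v) l :=
        (differentiable_id.smul_const v).differentiableAt.const_add p
      exact (h1.comp l h2).differentiableWithinAt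
    have hφC : ∀ ζ ∈ sphere (0 : ℂ) ρ, ‖φ ζ‖ ≤ M := by
      intro ζ hζ
      rw [mem_sphere, dist_zero_right] at hζ
      exact hM _ (hmem p hp ζ hζ.le)
    have h := slope_bound hρ hφd hφC (htle n) (htle k) (ht0 n) (ht0 k)
    have hφ0 : φ 0 = f p := by simp [hφdef]
    have hq1 : q n p = (t n)⁻¹ • (φ (t n) - φ 0) := by rw [hφ0]
    have hq2 : q k p = (t k)⁻¹ • (φ (t k) - φ 0) := by rw [hφ0]
    rw [hq1, hq2]
    exact h
  -- uniform Cauchy of the derivatives on the half ball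
  have hUC : UniformCauchySeqOn (fun n => fun p => fderiv ℂ (q n) p) atTop
      (ball z₀ (δ / 2)) := by
    rw [Metric.uniformCauchySeqOn_iff]
    intro ε hε
    set K : ℝ := 16 * M / (ρ * δ) with hKdef
    have hK0 : 0 ≤ K := by positivity
    obtain ⟨N, hN⟩ := exists_nat_gt (K / ε)
    refine ⟨N, fun n hn k hk p hp => ?_⟩
    have hsub : ball p (δ / 2) ⊆ ball z₀ δ := by
      intro y hy
      rw [mem_ball] at *
      calc dist y z₀ ≤ dist y p + dist p z₀ := dist_triangle _ _ _
        _ < δ / 2 + δ / 2 := add_lt_add hy hp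
        _ = δ := by ring
    have hgd : DifferentiableOn ℂ (fun y => q n y - q k y) (ball p (δ / 2)) :=
      fun y hy => ((hqdiff n y (hsub hy)).sub (hqdiff k y (hsub hy))).differentiableWithinAt
    have htnk : ‖t n - t k‖ ≤ ρ / ((N : ℝ) + 1) := by
      calc ‖t n - t k‖ ≤ ‖t n‖ + ‖t k‖ := norm_sub_le _ _
        _ ≤ (ρ / 2) * (1 / ((n : ℝ) + 1)) + (ρ / 2) * (1 / ((k : ℝ) + 1)) := by
            rw [htnorm n, htnorm k]
        _ ≤ (ρ / 2) * (1 / ((N : ℝ) + 1)) + (ρ / 2) * (1 / ((N : ℝ) + 1)) := by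
            have h1 : ((N : ℝ) + 1) ≤ ((n : ℝ) + 1) := by
              have := (Nat.cast_le (α := ℝ)).mpr hn; linarith
            have h2 : ((N : ℝ) + 1) ≤ ((k : ℝ) + 1) := by
              have := (Nat.cast_le (α := ℝ)).mpr hk; linarith
            gcongr <;> linarith
        _ = ρ / ((N : ℝ) + 1) := by ring
    have hgC : ∀ y ∈ ball p (δ / 2), ‖q n y - q k y‖ ≤ 4 * M / ρ ^ 2 * (ρ / ((N : ℝ) + 1)) := by
      intro y hy
      calc ‖q n y - q k y‖ ≤ 4 * M / ρ ^ 2 * ‖t n - t k‖ := hslopebd y (hsub hy) n k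
        _ ≤ 4 * M / ρ ^ 2 * (ρ / ((N : ℝ) + 1)) := by gcongr
    have hces := cauchy_deriv_bound (r := δ / 2) (r' := δ / 4) (by positivity)
      (by linarith) hgd hgC
    have hfd : fderiv ℂ (fun y => q n y - q k y) p = fderiv ℂ (q n) p - fderiv ℂ (q k) p :=
      fderiv_sub (hqdiff n p (hsub (mem_ball_self (by positivity))))
        (hqdiff k p (hsub (mem_ball_self (by positivity))))
    rw [dist_eq_norm, ← hfd]
    refine lt_of_le_of_lt hces ?_
    have harith : 4 * M / ρ ^ 2 * (ρ / ((N : ℝ) + 1)) / (δ / 4) = K / ((N : ℝ) + 1) := by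
      rw [hKdef]; field_simp; ring
    rw [harith]
    rw [div_lt_iff₀ (by positivity)]
    have h2 : K / ε < (N : ℝ) + 1 := hN.trans (by linarith)
    calc K = K / ε * ε := by field_simp
      _ < ((N : ℝ) + 1) * ε := by gcongr
      _ = ε * ((N : ℝ) + 1) := by ring
  -- limit of derivatives
  have hcs : ∀ p ∈ ball z₀ (δ / 2), CauchySeq (fun n => fderiv ℂ (q n) p) :=
    fun p hp => hUC.cauchySeq hp
  set g' : E → (E →L[ℂ] F) := fun p => limUnder atTop (fun n => fderiv ℂ (q n) p) with hg'def
  have hg'lim : ∀ p ∈ ball z₀ (δ / 2),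
      Tendsto (fun n => fderiv ℂ (q n) p) atTop (𝓝 (g' p)) :=
    fun p hp => (hcs p hp).tendsto_limUnder
  have hTU : TendstoUniformlyOn (fun n => fun p => fderiv ℂ (q n) p) g' atTop
      (ball z₀ (δ / 2)) :=
    hUC.tendstoUniformlyOn_of_tendsto hg'lim
  have hsub2 : ball z₀ (δ / 2) ⊆ ball z₀ δ := ball_subset_ball (by linarith)
  have hfinal := hasFDerivAt_of_tendstoUniformlyOn isOpen_ball hTU
    (fun n p hp => (hqdiff n p (hsub2 hp)).hasFDerivAt)
    (fun p hp => hqlim p (hsub2 hp)) (mem_ball_self (by positivity))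
  exact hfinal.differentiableAt


end TwinAux
end TwinAuxSec

/-- If `h` is holomorphic on an open `Ω ⊆ ℂ^m` and belongs to the class `𝒯^m`
(i.e. `Σᵢⱼ conj(h_{zᵢzⱼ})·h_{zᵢ}·h_{zⱼ} = μ·h` for a real-valued `μ`), then
`u = Re h` and `v = Im h` are orthogonal twin-harmonics on the corresponding
open subset of `ℝ^(2m)`. -/
theorem re_im_twinHarmonics {m : ℕ} (Ω : Set (Fin m → ℂ)) (hΩ : IsOpen Ω)
    (h : (Fin m → ℂ) → ℂ) (hh : DifferentiableOn ℂ h Ω)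
    (μ : (Fin m → ℂ) → ℝ)
    (hT : ∀ z ∈ Ω, ∑ i, ∑ j,
        (starRingEnd ℂ) (cpd (cpd h j) i z) * cpd h i z * cpd h j z = (μ z : ℂ) * h z) :
    ∀ w : Fin (m + m) → ℝ, emb w ∈ Ω →
      (fun x => (h (emb x)).im) w * lap (fun x => (h (emb x)).re) w
          = (fun x => (h (emb x)).re) w * lap (fun x => (h (emb x)).im) w ∧
      (fun x => (h (emb x)).im) w * infLap (fun x => (h (emb x)).re) w
          = (fun x => (h (emb x)).re) w * infLap (fun x => (h (emb x)).im) w ∧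
      (∑ i, pd (fun x => (h (emb x)).re) i w ^ 2)
          = (∑ i, pd (fun x => (h (emb x)).im) i w ^ 2) ∧
      (∑ i, pd (fun x => (h (emb x)).re) i w * pd (fun x => (h (emb x)).im) i w) = 0 := by
  intro w hw
  have hembc : Continuous (emb : (Fin (m + m) → ℝ) → (Fin m → ℂ)) := by
    rw [TwinAux.emb_eq]; exact (TwinAux.embL m).continuous
  have hUopen : IsOpen ((emb : (Fin (m + m) → ℝ) → (Fin m → ℂ)) ⁻¹' Ω) := hΩ.preimage hembc
  have hwU : w ∈ (emb : (Fin (m + m) → ℝ) → (Fin m → ℂ)) ⁻¹' Ω := hw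
  have hdh : ∀ x ∈ (emb : (Fin (m + m) → ℝ) → (Fin m → ℂ)) ⁻¹' Ω,
      DifferentiableAt ℂ h (emb x) := fun x hx => hh.differentiableAt (hΩ.mem_nhds hx)
  have hdc : ∀ (l : Fin m), ∀ x ∈ (emb : (Fin (m + m) → ℝ) → (Fin m → ℂ)) ⁻¹' Ω,
      DifferentiableAt ℂ (cpd h l) (emb x) := by
    intro l x hx
    exact TwinAux.key hΩ hh (Pi.single l 1) hx
  -- first derivatives at w
  have hu1 : ∀ k : Fin m, pd (fun x => (h (emb x)).re) (Fin.castAdd m k) w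
      = (cpd h k (emb w)).re := fun k => TwinAux.pd_re_cast (hdh w hwU) k
  have hu2 : ∀ k : Fin m, pd (fun x => (h (emb x)).re) (Fin.natAdd m k) w
      = -((cpd h k (emb w)).im) := fun k => TwinAux.pd_re_nat (hdh w hwU) k
  have hv1 : ∀ k : Fin m, pd (fun x => (h (emb x)).im) (Fin.castAdd m k) w
      = (cpd h k (emb w)).im := fun k => TwinAux.pd_im_cast (hdh w hwU) k
  have hv2 : ∀ k : Fin m, pd (fun x => (h (emb x)).im) (Fin.natAdd m k) w
      = (cpd h k (emb w)).re := fun k => TwinAux.pd_im_nat (hdh w hwU) k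
  -- eventual equalities of first derivatives
  have hevA : ∀ l : Fin m, (pd (fun x => (h (emb x)).re) (Fin.castAdd m l))
      =ᶠ[nhds w] (fun x => (cpd h l (emb x)).re) :=
    fun l => Filter.eventuallyEq_of_mem (hUopen.mem_nhds hwU)
      (fun x hx => TwinAux.pd_re_cast (hdh x hx) l)
  have hevB : ∀ l : Fin m, (pd (fun x => (h (emb x)).re) (Fin.natAdd m l))
      =ᶠ[nhds w] (fun x => -((cpd h l (emb x)).im)) :=
    fun l => Filter.eventuallyEq_of_mem (hUopen.mem_nhds hwU)
      (fun x hx => TwinAux.pd_re_nat (hdh x hx) l)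
  have hevC : ∀ l : Fin m, (pd (fun x => (h (emb x)).im) (Fin.castAdd m l))
      =ᶠ[nhds w] (fun x => (cpd h l (emb x)).im) :=
    fun l => Filter.eventuallyEq_of_mem (hUopen.mem_nhds hwU)
      (fun x hx => TwinAux.pd_im_cast (hdh x hx) l)
  have hevD : ∀ l : Fin m, (pd (fun x => (h (emb x)).im) (Fin.natAdd m l))
      =ᶠ[nhds w] (fun x => (cpd h l (emb x)).re) :=
    fun l => Filter.eventuallyEq_of_mem (hUopen.mem_nhds hwU)
      (fun x hx => TwinAux.pd_im_nat (hdh x hx) l)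
  -- second derivatives at w
  have huA : ∀ k l : Fin m,
      pd (pd (fun x => (h (emb x)).re) (Fin.castAdd m l)) (Fin.castAdd m k) w
        = (cpd (cpd h l) k (emb w)).re := by
    intro k l
    rw [TwinAux.pd_congr_nhds (hevA l), TwinAux.pd_re_cast (hdc l w hwU) k]
  have huB : ∀ k l : Fin m,
      pd (pd (fun x => (h (emb x)).re) (Fin.castAdd m l)) (Fin.natAdd m k) w
        = -((cpd (cpd h l) k (emb w)).im) := by
    intro k l
    rw [TwinAux.pd_congr_nhds (hevA l), TwinAux.pd_re_nat (hdc l w hwU) k]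
  have huC : ∀ k l : Fin m,
      pd (pd (fun x => (h (emb x)).re) (Fin.natAdd m l)) (Fin.castAdd m k) w
        = -((cpd (cpd h l) k (emb w)).im) := by
    intro k l
    rw [TwinAux.pd_congr_nhds (hevB l), TwinAux.pd_neg, TwinAux.pd_im_cast (hdc l w hwU) k]
  have huD : ∀ k l : Fin m,
      pd (pd (fun x => (h (emb x)).re) (Fin.natAdd m l)) (Fin.natAdd m k) w
        = -((cpd (cpd h l) k (emb w)).re) := by
    intro k l
    rw [TwinAux.pd_congr_nhds (hevB l), TwinAux.pd_neg, TwinAux.pd_im_nat (hdc l w hwU) k]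
  have hvA : ∀ k l : Fin m,
      pd (pd (fun x => (h (emb x)).im) (Fin.castAdd m l)) (Fin.castAdd m k) w
        = (cpd (cpd h l) k (emb w)).im := by
    intro k l
    rw [TwinAux.pd_congr_nhds (hevC l), TwinAux.pd_im_cast (hdc l w hwU) k]
  have hvB : ∀ k l : Fin m,
      pd (pd (fun x => (h (emb x)).im) (Fin.castAdd m l)) (Fin.natAdd m k) w
        = (cpd (cpd h l) k (emb w)).re := by
    intro k l
    rw [TwinAux.pd_congr_nhds (hevC l), TwinAux.pd_im_nat (hdc l w hwU) k]
  have hvC : ∀ k l : Fin m,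
      pd (pd (fun x => (h (emb x)).im) (Fin.natAdd m l)) (Fin.castAdd m k) w
        = (cpd (cpd h l) k (emb w)).re := by
    intro k l
    rw [TwinAux.pd_congr_nhds (hevD l), TwinAux.pd_re_cast (hdc l w hwU) k]
  have hvD : ∀ k l : Fin m,
      pd (pd (fun x => (h (emb x)).im) (Fin.natAdd m l)) (Fin.natAdd m k) w
        = -((cpd (cpd h l) k (emb w)).im) := by
    intro k l
    rw [TwinAux.pd_congr_nhds (hevD l), TwinAux.pd_re_nat (hdc l w hwU) k]
  -- the Laplacians vanish
  have hlapu : lap (fun x => (h (emb x)).re) w = 0 := by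
    unfold lap
    rw [Fin.sum_univ_add, ← Finset.sum_add_distrib]
    refine Finset.sum_eq_zero (fun k _ => ?_)
    rw [huA k k, huD k k]; ring
  have hlapv : lap (fun x => (h (emb x)).im) w = 0 := by
    unfold lap
    rw [Fin.sum_univ_add, ← Finset.sum_add_distrib]
    refine Finset.sum_eq_zero (fun k _ => ?_)
    rw [hvA k k, hvD k k]; ring
  have hTz := hT (emb w) hw
  -- infinity Laplacians
  have hinfu : infLap (fun x => (h (emb x)).re) w
      = ((∑ i, ∑ j, (starRingEnd ℂ) (cpd (cpd h j) i (emb w)) * cpd h i (emb w)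
          * cpd h j (emb w))).re := by
    unfold infLap
    simp only [Fin.sum_univ_add, Complex.re_sum]
    simp only [hu1, hu2, huA, huB, huC, huD]
    rw [← Finset.sum_add_distrib]
    refine Finset.sum_congr rfl (fun k _ => ?_)
    rw [← Finset.sum_add_distrib, ← Finset.sum_add_distrib, ← Finset.sum_add_distrib]
    refine Finset.sum_congr rfl (fun l _ => ?_)
    simp only [Complex.mul_re, Complex.mul_im, Complex.conj_re, Complex.conj_im]
    ring
  have hinfv : infLap (fun x => (h (emb x)).im) w
      = ((∑ i, ∑ j, (starRingEnd ℂ) (cpd (cpd h j) i (emb w)) * cpd h i (emb w)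
          * cpd h j (emb w))).im := by
    unfold infLap
    simp only [Fin.sum_univ_add, Complex.im_sum]
    simp only [hv1, hv2, hvA, hvB, hvC, hvD]
    rw [← Finset.sum_add_distrib]
    refine Finset.sum_congr rfl (fun k _ => ?_)
    rw [← Finset.sum_add_distrib, ← Finset.sum_add_distrib, ← Finset.sum_add_distrib]
    refine Finset.sum_congr rfl (fun l _ => ?_)
    simp only [Complex.mul_re, Complex.mul_im, Complex.conj_re, Complex.conj_im]
    ring
  have hinfu' : infLap (fun x => (h (emb x)).re) w = μ (emb w) * (h (emb w)).re := by
    rw [hinfu, hTz]; simp [Complex.mul_re]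
  have hinfv' : infLap (fun x => (h (emb x)).im) w = μ (emb w) * (h (emb w)).im := by
    rw [hinfv, hTz]; simp [Complex.mul_im]
  refine ⟨?_, ?_, ?_, ?_⟩
  · show (h (emb w)).im * lap (fun x => (h (emb x)).re) w
      = (h (emb w)).re * lap (fun x => (h (emb x)).im) w
    rw [hlapu, hlapv]; ring
  · show (h (emb w)).im * infLap (fun x => (h (emb x)).re) w
      = (h (emb w)).re * infLap (fun x => (h (emb x)).im) w
    rw [hinfu', hinfv']; ring
  · rw [Fin.sum_univ_add, Fin.sum_univ_add]
    simp only [hu1, hu2, hv1, hv2, neg_sq]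
    exact add_comm _ _
  · rw [Fin.sum_univ_add, ← Finset.sum_add_distrib]
    refine Finset.sum_eq_zero (fun k _ => ?_)
    rw [hu1, hu2, hv1, hv2]; ring
end
end
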